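/- arXiv:1701.03429 — 9 statements merged into one kernel-verified Lean document; each statement's English description precedes it below -/
import Mathlib

section
/- If $a$ and $b$ are holomorphic functions on a domain in the complex plane, then the function $\log(|a(z)|^2 + |b(z)|^2)$ is subharmonic on the set where $|a|^2+|b|^2 > 0$. -/
open Complex Metric

/-- The planar Laplacian `Δ G = ∂²G/∂x² + ∂²G/∂y²` of a function `G : ℂ → ℝ`,
computed at a point `z` via second derivatives along the real and imaginary directions. -/
noncomputable def planarLaplacian (G : ℂ → ℝ) (z : ℂ) : ℝ :=
  deriv (deriv fun x : ℝ => G (z + x)) 0 + deriv (deriv fun y : ℝ => G (z + y * Complex.I)) 0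

/-- Derivative of a complex function along a real line. -/
lemma hasDerivAt_line (f : ℂ → ℂ) (c z v : ℂ) (x : ℝ)
    (hf : HasDerivAt f c (z + x * v)) :
    HasDerivAt (fun t : ℝ => f (z + t * v)) (c * v) x := by
  have hline : HasDerivAt (fun t : ℝ => z + (t : ℂ) * v) v x := by
    simpa using (Complex.ofRealCLM.hasDerivAt.mul_const v).const_add z
  have h := (hf.hasFDerivAt.restrictScalars ℝ).comp_hasDerivAt x hline
  refine h.congr_deriv ?_
  simp [mul_comm]

/-- Derivative of `normSq ∘ g` for a real-variable complex valued `g`. -/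
lemma hasDerivAt_normSq_comp {g : ℝ → ℂ} {g' : ℂ} {x : ℝ} (hg : HasDerivAt g g' x) :
    HasDerivAt (fun t => Complex.normSq (g t))
      (2 * ((starRingEnd ℂ) (g x) * g').re) x := by
  have hre : HasDerivAt (fun t => (g t).re) g'.re x := by
    exact Complex.reCLM.hasFDerivAt.comp_hasDerivAt x hg
  have him : HasDerivAt (fun t => (g t).im) g'.im x := by
    exact Complex.imCLM.hasFDerivAt.comp_hasDerivAt x hg
  have h := (hre.mul hre).add (him.mul him)
  have hfun : (fun t => Complex.normSq (g t)) =
      fun t => (g t).re * (g t).re + (g t).im * (g t).im := by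
    funext t; simp [Complex.normSq_apply]
  rw [hfun]
  refine h.congr_deriv ?_
  simp [Complex.mul_re, Complex.conj_re, Complex.conj_im]
  ring

/-- Second derivative along a line of `log (|a|² + |b|²)`. -/
lemma line_second_deriv (a b : ℂ → ℂ) (z v : ℂ) (hv : Complex.normSq v = 1)
    (ε : ℝ) (hε : 0 < ε)
    (h1 : ∀ w ∈ ball z ε, HasDerivAt a (deriv a w) w)
    (h1' : ∀ w ∈ ball z ε, HasDerivAt (deriv a) (deriv (deriv a) w) w)
    (h2 : ∀ w ∈ ball z ε, HasDerivAt b (deriv b w) w)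
    (h2' : ∀ w ∈ ball z ε, HasDerivAt (deriv b) (deriv (deriv b) w) w)
    (hu : ∀ w ∈ ball z ε, 0 < Complex.normSq (a w) + Complex.normSq (b w)) :
    deriv (deriv (fun x : ℝ =>
        Real.log (Complex.normSq (a (z + x * v)) + Complex.normSq (b (z + x * v))))) 0 =
      (2 * ((Complex.normSq (deriv a z) + Complex.normSq (deriv b z)) * Complex.normSq v
          + (((starRingEnd ℂ) (a z) * deriv (deriv a) z
              + (starRingEnd ℂ) (b z) * deriv (deriv b) z) * v ^ 2).re)
        * (Complex.normSq (a z) + Complex.normSq (b z))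
        - (2 * (((starRingEnd ℂ) (a z) * deriv a z
              + (starRingEnd ℂ) (b z) * deriv b z) * v).re) ^ 2)
        / (Complex.normSq (a z) + Complex.normSq (b z)) ^ 2 := by
  have habs : ‖v‖ = 1 := by
    have := Complex.sq_norm v
    nlinarith [norm_nonneg v]
  -- membership of line points in the ball
  have hmem : ∀ x : ℝ, x ∈ ball (0 : ℝ) ε → z + (x : ℂ) * v ∈ ball z ε := by
    intro x hx
    simp only [Metric.mem_ball, Real.dist_eq, sub_zero] at hx
    simp only [Metric.mem_ball, dist_eq_norm]
    calc ‖z + (x : ℂ) * v - z‖ = ‖(x : ℂ)‖ * ‖v‖ := by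
          rw [add_sub_cancel_left, norm_mul]
    _ = |x| := by simp [habs]
    _ < ε := hx
  set q : ℝ → ℝ := fun x =>
    Complex.normSq (a (z + x * v)) + Complex.normSq (b (z + x * v)) with hq_def
  set p : ℝ → ℝ := fun x =>
    2 * (((starRingEnd ℂ) (a (z + x * v)) * deriv a (z + x * v)
        + (starRingEnd ℂ) (b (z + x * v)) * deriv b (z + x * v)) * v).re with hp_def
  -- derivative of q is p on the ball
  have hq : ∀ x ∈ ball (0 : ℝ) ε, HasDerivAt q (p x) x := by
    intro x hx
    have hw := hmem x hx
    have hA := hasDerivAt_line a (deriv a (z + x * v)) z v x (h1 _ hw)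
    have hB := hasDerivAt_line b (deriv b (z + x * v)) z v x (h2 _ hw)
    have hqa := hasDerivAt_normSq_comp hA
    have hqb := hasDerivAt_normSq_comp hB
    have h := hqa.add hqb
    refine h.congr_deriv ?_
    simp only [hp_def, add_mul, Complex.add_re, mul_assoc]
    ring
  -- derivative of p at 0
  have hw0 : z + (0 : ℝ) * v ∈ ball z ε := hmem 0 (by simpa using hε)
  have hz0 : z + ((0 : ℝ) : ℂ) * v = z := by simp
  have hp0 : HasDerivAt p
      (2 * ((Complex.normSq (deriv a z) + Complex.normSq (deriv b z)) * Complex.normSq v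
        + (((starRingEnd ℂ) (a z) * deriv (deriv a) z
            + (starRingEnd ℂ) (b z) * deriv (deriv b) z) * v ^ 2).re)) 0 := by
    have hwz := hw0; rw [hz0] at hwz
    have hA : HasDerivAt (fun t : ℝ => a (z + t * v)) (deriv a z * v) 0 := by
      have := hasDerivAt_line a (deriv a (z + (0:ℝ) * v)) z v 0 (h1 _ hw0)
      rwa [hz0] at this
    have hB : HasDerivAt (fun t : ℝ => b (z + t * v)) (deriv b z * v) 0 := by
      have := hasDerivAt_line b (deriv b (z + (0:ℝ) * v)) z v 0 (h2 _ hw0)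
      rwa [hz0] at this
    have hA' : HasDerivAt (fun t : ℝ => deriv a (z + t * v)) (deriv (deriv a) z * v) 0 := by
      have := hasDerivAt_line (deriv a) (deriv (deriv a) (z + (0:ℝ) * v)) z v 0 (h1' _ hw0)
      rwa [hz0] at this
    have hB' : HasDerivAt (fun t : ℝ => deriv b (z + t * v)) (deriv (deriv b) z * v) 0 := by
      have := hasDerivAt_line (deriv b) (deriv (deriv b) (z + (0:ℝ) * v)) z v 0 (h2' _ hw0)
      rwa [hz0] at this
    have hcA : HasDerivAt (fun t : ℝ => (starRingEnd ℂ) (a (z + t * v)))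
        ((starRingEnd ℂ) (deriv a z * v)) 0 := hA.star
    have hcB : HasDerivAt (fun t : ℝ => (starRingEnd ℂ) (b (z + t * v)))
        ((starRingEnd ℂ) (deriv b z * v)) 0 := hB.star
    have hT : HasDerivAt (fun t : ℝ =>
        ((starRingEnd ℂ) (a (z + t * v)) * deriv a (z + t * v)
          + (starRingEnd ℂ) (b (z + t * v)) * deriv b (z + t * v)) * v)
        (((starRingEnd ℂ) (deriv a z * v) * deriv a z
            + (starRingEnd ℂ) (a z) * (deriv (deriv a) z * v)
          + ((starRingEnd ℂ) (deriv b z * v) * deriv b z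
            + (starRingEnd ℂ) (b z) * (deriv (deriv b) z * v))) * v) 0 := by
      have := ((hcA.mul hA').add (hcB.mul hB')).mul_const v
      simpa [hz0] using this
    have hre : HasDerivAt (fun t : ℝ =>
        (((starRingEnd ℂ) (a (z + t * v)) * deriv a (z + t * v)
          + (starRingEnd ℂ) (b (z + t * v)) * deriv b (z + t * v)) * v).re)
        ((((starRingEnd ℂ) (deriv a z * v) * deriv a z
            + (starRingEnd ℂ) (a z) * (deriv (deriv a) z * v)
          + ((starRingEnd ℂ) (deriv b z * v) * deriv b z
            + (starRingEnd ℂ) (b z) * (deriv (deriv b) z * v))) * v).re) 0 := by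
      have h := Complex.reCLM.hasFDerivAt.comp_hasDerivAt 0 hT
      simpa only [Function.comp_def, Complex.reCLM_apply] using h
    have h := hre.const_mul 2
    have hca : deriv a z * (starRingEnd ℂ) (deriv a z) = (Complex.normSq (deriv a z) : ℂ) :=
      Complex.mul_conj _
    have hcb : deriv b z * (starRingEnd ℂ) (deriv b z) = (Complex.normSq (deriv b z) : ℂ) :=
      Complex.mul_conj _
    have hcv : v * (starRingEnd ℂ) v = (Complex.normSq v : ℂ) := Complex.mul_conj _
    have hcx : ((starRingEnd ℂ) (deriv a z * v) * deriv a z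
          + (starRingEnd ℂ) (a z) * (deriv (deriv a) z * v)
        + ((starRingEnd ℂ) (deriv b z * v) * deriv b z
          + (starRingEnd ℂ) (b z) * (deriv (deriv b) z * v))) * v
        = ((Complex.normSq (deriv a z) : ℂ) + (Complex.normSq (deriv b z) : ℂ))
            * (Complex.normSq v : ℂ)
          + ((starRingEnd ℂ) (a z) * deriv (deriv a) z
            + (starRingEnd ℂ) (b z) * deriv (deriv b) z) * v ^ 2 := by
      rw [map_mul, map_mul]
      linear_combination ((starRingEnd ℂ) v * v) * hca + ((starRingEnd ℂ) v * v) * hcb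
        + ((Complex.normSq (deriv a z) : ℂ) + (Complex.normSq (deriv b z) : ℂ)) * hcv
    refine h.congr_deriv ?_
    rw [hcx]
    simp only [Complex.add_re, Complex.mul_re, Complex.ofReal_re, Complex.ofReal_im]
    ring
  -- derivative of q at 0
  have hq0 : HasDerivAt q (p 0) 0 := hq 0 (by simpa using hε)
  have hqpos : (0:ℝ) < q 0 := by
    have := hu _ hw0
    simpa [hq_def, hz0] using this
  -- log derivative on the ball
  have hlog : ∀ x ∈ ball (0 : ℝ) ε, HasDerivAt (fun x : ℝ =>
      Real.log (Complex.normSq (a (z + x * v)) + Complex.normSq (b (z + x * v))))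
      (p x / q x) x := by
    intro x hx
    exact (hq x hx).log (ne_of_gt (by simpa [hq_def] using hu _ (hmem x hx)))
  have hev : deriv (fun x : ℝ =>
      Real.log (Complex.normSq (a (z + x * v)) + Complex.normSq (b (z + x * v))))
      =ᶠ[nhds (0:ℝ)] fun x => p x / q x := by
    filter_upwards [Metric.ball_mem_nhds (0:ℝ) hε] with x hx
    exact (hlog x hx).deriv
  rw [hev.deriv_eq]
  have hdiv := hp0.div hq0 (ne_of_gt hqpos)
  rw [show (fun x => p x / q x) = p / q from rfl, hdiv.deriv]
  have hq0v : q 0 = Complex.normSq (a z) + Complex.normSq (b z) := by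
    simp [hq_def, hz0]
  have hp0v : p 0 = 2 * (((starRingEnd ℂ) (a z) * deriv a z
      + (starRingEnd ℂ) (b z) * deriv b z) * v).re := by
    simp [hp_def, hz0]
  rw [hq0v, hp0v]
  ring

/-- If `a`, `b` are holomorphic on an open domain `Ω ⊆ ℂ`, then
`log (|a|² + |b|²)` is subharmonic (`Δ ≥ 0`) on the set where `|a|² + |b|² > 0`. -/
theorem log_sq_add_sq_subharmonic (Ω : Set ℂ) (hΩ : IsOpen Ω) (a b : ℂ → ℂ)
    (ha : DifferentiableOn ℂ a Ω) (hb : DifferentiableOn ℂ b Ω) :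
    ∀ z ∈ Ω, ‖a z‖ ^ 2 + ‖b z‖ ^ 2 > 0 →
      0 ≤ planarLaplacian (fun w => Real.log (‖a w‖ ^ 2 + ‖b w‖ ^ 2)) z := by
  intro z hz hpos
  -- switch to normSq
  have hpos' : 0 < Complex.normSq (a z) + Complex.normSq (b z) := by
    simpa [Complex.sq_norm] using hpos
  -- analyticity, second derivatives
  have haA : AnalyticOnNhd ℂ a Ω := ha.analyticOnNhd hΩ
  have hbA : AnalyticOnNhd ℂ b Ω := hb.analyticOnNhd hΩ
  have haD : DifferentiableOn ℂ (deriv a) Ω := haA.deriv.differentiableOn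
  have hbD : DifferentiableOn ℂ (deriv b) Ω := hbA.deriv.differentiableOn
  -- find a ball where everything holds
  have hcont : ContinuousAt (fun w => Complex.normSq (a w) + Complex.normSq (b w)) z := by
    have hca : ContinuousAt a z := (ha.differentiableAt (hΩ.mem_nhds hz)).continuousAt
    have hcb : ContinuousAt b z := (hb.differentiableAt (hΩ.mem_nhds hz)).continuousAt
    exact ((Complex.continuous_normSq.continuousAt.comp hca).add
      (Complex.continuous_normSq.continuousAt.comp hcb))
  have hev : ∀ᶠ w in nhds z, 0 < Complex.normSq (a w) + Complex.normSq (b w) :=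
    hcont.eventually (eventually_gt_nhds hpos')
  obtain ⟨ε, hε, hball⟩ := Metric.mem_nhds_iff.mp (Filter.inter_mem (hΩ.mem_nhds hz) hev)
  have hballΩ : ball z ε ⊆ Ω := fun w hw => (hball hw).1
  have hballpos : ∀ w ∈ ball z ε, 0 < Complex.normSq (a w) + Complex.normSq (b w) :=
    fun w hw => (hball hw).2
  have h1 : ∀ w ∈ ball z ε, HasDerivAt a (deriv a w) w :=
    fun w hw => (ha.differentiableAt (hΩ.mem_nhds (hballΩ hw))).hasDerivAt
  have h2 : ∀ w ∈ ball z ε, HasDerivAt b (deriv b w) w :=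
    fun w hw => (hb.differentiableAt (hΩ.mem_nhds (hballΩ hw))).hasDerivAt
  have h1' : ∀ w ∈ ball z ε, HasDerivAt (deriv a) (deriv (deriv a) w) w :=
    fun w hw => (haD.differentiableAt (hΩ.mem_nhds (hballΩ hw))).hasDerivAt
  have h2' : ∀ w ∈ ball z ε, HasDerivAt (deriv b) (deriv (deriv b) w) w :=
    fun w hw => (hbD.differentiableAt (hΩ.mem_nhds (hballΩ hw))).hasDerivAt
  -- apply the line lemma in the two directions
  have key1 := line_second_deriv a b z 1 Complex.normSq_one ε hε h1 h1' h2 h2' hballpos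
  have key2 := line_second_deriv a b z Complex.I Complex.normSq_I ε hε h1 h1' h2 h2' hballpos
  -- rewrite the Laplacian
  unfold planarLaplacian
  have e1 : (fun x : ℝ => Real.log (‖a (z + x)‖ ^ 2 + ‖b (z + x)‖ ^ 2))
      = fun x : ℝ => Real.log (Complex.normSq (a (z + x * 1)) + Complex.normSq (b (z + x * 1))) := by
    funext x; rw [mul_one, Complex.sq_norm, Complex.sq_norm]
  have e2 : (fun y : ℝ => Real.log (‖a (z + y * Complex.I)‖ ^ 2
        + ‖b (z + y * Complex.I)‖ ^ 2))
      = fun y : ℝ => Real.log (Complex.normSq (a (z + y * Complex.I))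
        + Complex.normSq (b (z + y * Complex.I))) := by
    funext y; rw [Complex.sq_norm, Complex.sq_norm]
  rw [e1, e2, key1, key2]
  -- now a pure algebra/inequality problem
  set Q := Complex.normSq (a z) + Complex.normSq (b z) with hQ
  set S := (starRingEnd ℂ) (a z) * deriv a z + (starRingEnd ℂ) (b z) * deriv b z with hS
  set T := (starRingEnd ℂ) (a z) * deriv (deriv a) z
      + (starRingEnd ℂ) (b z) * deriv (deriv b) z with hT
  set N := Complex.normSq (deriv a z) + Complex.normSq (deriv b z) with hN
  have hone : (1:ℂ) ^ 2 = 1 := one_pow 2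
  have hI2 : Complex.I ^ 2 = -1 := Complex.I_sq
  rw [hone, hI2, Complex.normSq_one, Complex.normSq_I]
  simp only [mul_one, mul_neg_one, Complex.neg_re]
  -- combine fractions: ((2(N + T.re))Q - (2 S.re)²)/Q² + ((2(N - T.re))Q - (2 (S*I).re)²)/Q²
  rw [← add_div]
  apply div_nonneg _ (sq_nonneg Q)
  have hSI : (S * Complex.I).re = -S.im := Complex.mul_I_re S
  rw [hSI]
  have hCS : S.re ^ 2 + S.im ^ 2 ≤ N * Q := by
    rw [hS, hN, hQ]
    simp only [Complex.add_re, Complex.add_im, Complex.mul_re, Complex.mul_im,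
      Complex.conj_re, Complex.conj_im, Complex.normSq_apply]
    nlinarith [sq_nonneg ((a z).re * (deriv b z).re - (a z).im * (deriv b z).im
        - (deriv a z).re * (b z).re + (deriv a z).im * (b z).im),
      sq_nonneg ((a z).re * (deriv b z).im + (a z).im * (deriv b z).re
        - (deriv a z).re * (b z).im - (deriv a z).im * (b z).re)]
  nlinarith [hCS, hpos']
end

section
/- Let $f$ be holomorphic on the unit disk, $p > 1$, $q = p/(p-1)$, and $\epsilon > 0$. Then $\Delta\big((q\epsilon + |f|^2)^{p/2}\big) = p(q\epsilon + |f|^2)^{p/2-2}(2q\epsilon + p|f|^2)|f'|^2$. -/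
open Complex Metric Filter Topology

private lemma line_hasDerivAt (z e : ℂ) (t : ℝ) :
    HasDerivAt (fun s : ℝ => z + (s : ℂ) * e) e t := by
  have h1 : HasDerivAt (fun s : ℝ => (s : ℂ)) 1 t := by
    simpa using (hasDerivAt_id t).ofReal_comp
  simpa using (h1.mul_const e).const_add z

private lemma key (f : ℂ → ℂ) (z e : ℂ) (hf : AnalyticAt ℂ f z)
    (hf' : AnalyticAt ℂ (deriv f) z) (c p : ℝ) (hc : 0 < c) :
    deriv (deriv fun t : ℝ => (c + ((f (z + t*e)).re^2 + (f (z + t*e)).im^2)) ^ (p/2)) 0 =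
    (p/2) * (((2*((f z).re*(e*deriv f z).re + (f z).im*(e*deriv f z).im)) * (p/2-1) *
        (c + ((f z).re^2+(f z).im^2)) ^ (p/2-2)) *
        (2*((f z).re*(e*deriv f z).re + (f z).im*(e*deriv f z).im))
      + (c + ((f z).re^2+(f z).im^2)) ^ (p/2-1) *
        (2*(((e*deriv f z).re*(e*deriv f z).re + (f z).re*(e*(e*deriv (deriv f) z)).re)
          + ((e*deriv f z).im*(e*deriv f z).im + (f z).im*(e*(e*deriv (deriv f) z)).im)))) := by
  set F := deriv f with hF
  set γ : ℝ → ℂ := fun t => z + (t : ℂ) * e with hγdef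
  have hγ : ∀ t : ℝ, HasDerivAt γ e t := line_hasDerivAt z e
  have hγ0 : γ 0 = z := by simp [hγdef]
  have hcont : Tendsto γ (𝓝 0) (𝓝 z) := by
    have := (hγ 0).continuousAt.tendsto
    rwa [hγ0] at this
  have hev : ∀ᶠ t : ℝ in 𝓝 0, AnalyticAt ℂ f (γ t) :=
    hcont.eventually hf.eventually_analyticAt
  set N : ℝ → ℝ := fun t => (f (γ t)).re^2 + (f (γ t)).im^2 with hNdef
  set D : ℝ → ℝ := fun t =>
    2 * ((f (γ t)).re * (e * F (γ t)).re + (f (γ t)).im * (e * F (γ t)).im) with hDdef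
  have hNpos : ∀ t, 0 < c + N t := by
    intro t; have : 0 ≤ N t := by simp only [hNdef]; positivity
    linarith
  -- derivative of f along the line, at analytic points
  have hgd : ∀ t : ℝ, AnalyticAt ℂ f (γ t) →
      HasDerivAt (fun s => f (γ s)) (e * F (γ t)) t := by
    intro t ht
    have := (ht.differentiableAt.hasDerivAt).scomp t (hγ t)
    simpa [smul_eq_mul, Function.comp_def, hF] using this
  -- derivative of N
  have hDN : ∀ t : ℝ, AnalyticAt ℂ f (γ t) → HasDerivAt N (D t) t := by
    intro t ht
    have hg := hgd t ht
    have hre : HasDerivAt (fun s => (f (γ s)).re) ((e * F (γ t)).re) t := by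
      simpa [Function.comp_def] using Complex.reCLM.hasFDerivAt.comp_hasDerivAt t hg
    have him : HasDerivAt (fun s => (f (γ s)).im) ((e * F (γ t)).im) t := by
      simpa [Function.comp_def] using Complex.imCLM.hasFDerivAt.comp_hasDerivAt t hg
    have := (hre.pow 2).add (him.pow 2)
    refine this.congr_deriv ?_
    simp [hDdef]; ring
  -- derivative of G := (c + N)^(p/2)
  have hGd : ∀ t : ℝ, AnalyticAt ℂ f (γ t) →
      HasDerivAt (fun s : ℝ => (c + N s) ^ (p/2)) (D t * (p/2) * (c + N t) ^ (p/2-1)) t := by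
    intro t ht
    have h1 := ((hasDerivAt_const t c).add (hDN t ht)).rpow_const (p := p/2)
      (Or.inl (hNpos t).ne')
    simpa using h1
  have hderiv_eq : deriv (fun s : ℝ => (c + N s) ^ (p/2)) =ᶠ[𝓝 (0:ℝ)]
      fun t => D t * (p/2) * (c + N t) ^ (p/2-1) := by
    filter_upwards [hev] with t ht using (hGd t ht).deriv
  have hgoal : deriv (deriv fun t : ℝ => (c + N t) ^ (p/2)) 0 =
      deriv (fun t => D t * (p/2) * (c + N t) ^ (p/2-1)) 0 :=
    hderiv_eq.deriv_eq
  -- now compute the derivative at 0 of the explicit expression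
  have hfaz : AnalyticAt ℂ f (γ 0) := by rwa [hγ0]
  have hf'z : AnalyticAt ℂ F (γ 0) := by rwa [hγ0]
  have hg0 := hgd 0 hfaz
  have hFd : HasDerivAt (fun s => F (γ s)) (e * deriv F (γ 0)) 0 := by
    have := (hf'z.differentiableAt.hasDerivAt).scomp 0 (hγ 0)
    simpa [smul_eq_mul, Function.comp_def] using this
  have hh : HasDerivAt (fun s => e * F (γ s)) (e * (e * deriv F (γ 0))) 0 := hFd.const_mul e
  have hure : HasDerivAt (fun s => (f (γ s)).re) ((e * F (γ 0)).re) 0 := by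
    simpa [Function.comp_def] using Complex.reCLM.hasFDerivAt.comp_hasDerivAt 0 hg0
  have huim : HasDerivAt (fun s => (f (γ s)).im) ((e * F (γ 0)).im) 0 := by
    simpa [Function.comp_def] using Complex.imCLM.hasFDerivAt.comp_hasDerivAt 0 hg0
  have hxre : HasDerivAt (fun s => (e * F (γ s)).re) ((e * (e * deriv F (γ 0))).re) 0 := by
    simpa [Function.comp_def] using Complex.reCLM.hasFDerivAt.comp_hasDerivAt 0 hh
  have hxim : HasDerivAt (fun s => (e * F (γ s)).im) ((e * (e * deriv F (γ 0))).im) 0 := by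
    simpa [Function.comp_def] using Complex.imCLM.hasFDerivAt.comp_hasDerivAt 0 hh
  have hD0 : HasDerivAt D
      (2 * (((e * F (γ 0)).re * (e * F (γ 0)).re + (f (γ 0)).re * (e * (e * deriv F (γ 0))).re)
        + ((e * F (γ 0)).im * (e * F (γ 0)).im + (f (γ 0)).im * (e * (e * deriv F (γ 0))).im))) 0 := by
    exact (((hure.mul hxre).add (huim.mul hxim)).const_mul 2)
  have hN0 : HasDerivAt N (D 0) 0 := hDN 0 hfaz
  have hQ : HasDerivAt (fun s : ℝ => (c + N s) ^ (p/2-1))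
      (D 0 * (p/2-1) * (c + N 0) ^ (p/2-2)) 0 := by
    have h1 := ((hasDerivAt_const 0 c).add hN0).rpow_const (p := p/2-1)
      (Or.inl (hNpos 0).ne')
    have : p/2 - 1 - 1 = p/2 - 2 := by ring
    simpa [this] using h1
  have hfinal : HasDerivAt (fun t => D t * (p/2) * (c + N t) ^ (p/2-1))
      ((2 * (((e * F (γ 0)).re * (e * F (γ 0)).re + (f (γ 0)).re * (e * (e * deriv F (γ 0))).re)
        + ((e * F (γ 0)).im * (e * F (γ 0)).im + (f (γ 0)).im * (e * (e * deriv F (γ 0))).im)))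
        * (p/2) * (c + N 0) ^ (p/2-1)
       + (D 0 * (p/2)) * (D 0 * (p/2-1) * (c + N 0) ^ (p/2-2))) 0 :=
    (hD0.mul_const (p/2)).mul hQ
  rw [hgoal, hfinal.deriv]
  simp only [hNdef, hDdef]
  simp only [hγ0]
  ring


/-- For `f` holomorphic on the unit disk, `p > 1`, `q = p/(p-1)`, `ε > 0`:
`Δ((qε + |f|²)^{p/2}) = p (qε + |f|²)^{p/2-2} (2qε + p|f|²) |f'|²`. -/
theorem laplacian_F_eps (f : ℂ → ℂ) (hf : DifferentiableOn ℂ f (ball (0 : ℂ) 1))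
    (p q : ℝ) (hp : 1 < p) (hq : q = p / (p - 1)) (ε : ℝ) (hε : 0 < ε) :
    ∀ z ∈ ball (0 : ℂ) 1,
      planarLaplacian (fun w => (q * ε + ‖f w‖ ^ 2) ^ (p / 2)) z =
        p * (q * ε + ‖f z‖ ^ 2) ^ (p / 2 - 2) *
          (2 * q * ε + p * ‖f z‖ ^ 2) * ‖deriv f z‖ ^ 2 := by
  intro z hz
  have hfa : AnalyticAt ℂ f z := hf.analyticAt (isOpen_ball.mem_nhds hz)
  have hfd : AnalyticAt ℂ (deriv f) z :=
    (hf.analyticOnNhd isOpen_ball).deriv z hz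
  have hq0 : 0 < q := by
    rw [hq]; exact div_pos (by linarith) (by linarith)
  have hc : 0 < q * ε := mul_pos hq0 hε
  have habs : ∀ w : ℂ, ‖w‖ ^ 2 = w.re ^ 2 + w.im ^ 2 := fun w => by
    rw [Complex.sq_norm, Complex.normSq_apply]; ring
  have e1 : (fun x : ℝ => (q * ε + ‖f (z + (x : ℂ))‖ ^ 2) ^ (p / 2)) =
      fun t : ℝ => (q * ε + ((f (z + (t : ℂ) * 1)).re ^ 2 + (f (z + (t : ℂ) * 1)).im ^ 2)) ^ (p / 2) := by
    funext t; rw [mul_one, habs]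
  have e2 : (fun y : ℝ => (q * ε + ‖f (z + (y : ℂ) * I)‖ ^ 2) ^ (p / 2)) =
      fun t : ℝ => (q * ε + ((f (z + (t : ℂ) * I)).re ^ 2 + (f (z + (t : ℂ) * I)).im ^ 2)) ^ (p / 2) := by
    funext t; rw [habs]
  show deriv (deriv fun x : ℝ => (q * ε + ‖f (z + (x : ℂ))‖ ^ 2) ^ (p / 2)) 0 +
      deriv (deriv fun y : ℝ => (q * ε + ‖f (z + (y : ℂ) * I)‖ ^ 2) ^ (p / 2)) 0 = _
  rw [e1, e2, key f z 1 hfa hfd (q * ε) p hc, key f z I hfa hfd (q * ε) p hc]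
  have hS : 0 < q * ε + ((f z).re ^ 2 + (f z).im ^ 2) := by
    have : (0:ℝ) ≤ (f z).re ^ 2 + (f z).im ^ 2 := by positivity
    linarith
  have hpow : (q * ε + ((f z).re ^ 2 + (f z).im ^ 2)) ^ (p / 2 - 1) =
      (q * ε + ((f z).re ^ 2 + (f z).im ^ 2)) ^ (p / 2 - 2) *
        (q * ε + ((f z).re ^ 2 + (f z).im ^ 2)) := by
    rw [show p / 2 - 1 = p / 2 - 2 + 1 by ring, Real.rpow_add hS, Real.rpow_one]
  rw [habs (f z), habs (deriv f z), hpow]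
  simp only [Complex.mul_re, Complex.mul_im, Complex.I_re, Complex.I_im,
    Complex.one_re, Complex.one_im]
  ring
end

section
/- Let $f = u+iv$ be holomorphic on the unit disk, $\epsilon > 0$, and define $F_\epsilon = (\tfrac{4}{3}\epsilon + |f|^2)^2$, $U_\epsilon = (\epsilon + u^2)^2$, $V_\epsilon = (\epsilon + v^2)^2$. Then $\Delta U_\epsilon + \Delta V_\epsilon = \tfrac{3}{4}\Delta F_\epsilon$ on the disk. -/
open Complex Metric

open Filter in
private lemma hasDerivAt_re' {g : ℝ → ℂ} {c : ℂ} {x : ℝ} (h : HasDerivAt g c x) :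
    HasDerivAt (fun t => (g t).re) c.re x := by
  simpa [Function.comp_def] using (Complex.reCLM.hasFDerivAt.comp_hasDerivAt x h)

private lemma hasDerivAt_im' {g : ℝ → ℂ} {c : ℂ} {x : ℝ} (h : HasDerivAt g c x) :
    HasDerivAt (fun t => (g t).im) c.im x := by
  simpa [Function.comp_def] using (Complex.imCLM.hasFDerivAt.comp_hasDerivAt x h)

open Filter in
private lemma sd (c : ℝ) (A A1 : ℝ → ℝ) (a2 : ℝ)
    (hA : ∀ᶠ x in nhds (0:ℝ), HasDerivAt A (A1 x) x)
    (hA1 : HasDerivAt A1 a2 0) :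
    deriv (deriv fun x => (c + A x) ^ 2) 0 = 2 * A1 0 ^ 2 + 2 * (c + A 0) * a2 := by
  have hA0 : HasDerivAt A (A1 0) 0 := hA.self_of_nhds
  have h1 : (deriv fun x => (c + A x) ^ 2) =ᶠ[nhds (0:ℝ)] fun x => 2 * (c + A x) * A1 x := by
    filter_upwards [hA] with x hx
    rw [(((hasDerivAt_const x c).fun_add hx).fun_pow 2).deriv]
    push_cast; ring
  rw [h1.deriv_eq]
  rw [((((hasDerivAt_const (0:ℝ) c).fun_add hA0).const_mul 2).fun_mul hA1).deriv]
  ring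

open Filter in
private lemma dirU (c : ℝ) (g g1 : ℝ → ℂ) (g2 : ℂ)
    (h1 : ∀ᶠ x in nhds (0:ℝ), HasDerivAt g (g1 x) x)
    (h2 : HasDerivAt g1 g2 0) :
    deriv (deriv fun x => (c + (g x).re ^ 2) ^ 2) 0 =
      2 * (2 * (g 0).re * (g1 0).re) ^ 2 +
        2 * (c + (g 0).re ^ 2) *
          (2 * ((g1 0).re * (g1 0).re) + 2 * ((g 0).re * g2.re)) := by
  have hA : ∀ᶠ x in nhds (0:ℝ), HasDerivAt (fun t => (g t).re ^ 2)
      ((fun t => 2 * (g t).re * (g1 t).re) x) x := by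
    filter_upwards [h1] with x hx
    have h := (hasDerivAt_re' hx).fun_pow 2
    refine h.congr_deriv ?_
    push_cast; ring
  have hg0 := hasDerivAt_re' h1.self_of_nhds
  have hg10 := hasDerivAt_re' h2
  have hA1 : HasDerivAt (fun t => 2 * (g t).re * (g1 t).re)
      (2 * ((g1 0).re * (g1 0).re) + 2 * ((g 0).re * g2.re)) 0 := by
    have h := (hg0.const_mul 2).fun_mul hg10
    refine h.congr_deriv ?_
    ring
  exact sd c _ _ _ hA hA1

open Filter in
private lemma dirV (c : ℝ) (g g1 : ℝ → ℂ) (g2 : ℂ)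
    (h1 : ∀ᶠ x in nhds (0:ℝ), HasDerivAt g (g1 x) x)
    (h2 : HasDerivAt g1 g2 0) :
    deriv (deriv fun x => (c + (g x).im ^ 2) ^ 2) 0 =
      2 * (2 * (g 0).im * (g1 0).im) ^ 2 +
        2 * (c + (g 0).im ^ 2) *
          (2 * ((g1 0).im * (g1 0).im) + 2 * ((g 0).im * g2.im)) := by
  have hA : ∀ᶠ x in nhds (0:ℝ), HasDerivAt (fun t => (g t).im ^ 2)
      ((fun t => 2 * (g t).im * (g1 t).im) x) x := by
    filter_upwards [h1] with x hx
    have h := (hasDerivAt_im' hx).fun_pow 2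
    refine h.congr_deriv ?_
    push_cast; ring
  have hg0 := hasDerivAt_im' h1.self_of_nhds
  have hg10 := hasDerivAt_im' h2
  have hA1 : HasDerivAt (fun t => 2 * (g t).im * (g1 t).im)
      (2 * ((g1 0).im * (g1 0).im) + 2 * ((g 0).im * g2.im)) 0 := by
    have h := (hg0.const_mul 2).fun_mul hg10
    refine h.congr_deriv ?_
    ring
  exact sd c _ _ _ hA hA1

open Filter in
private lemma dirF (c : ℝ) (g g1 : ℝ → ℂ) (g2 : ℂ)
    (h1 : ∀ᶠ x in nhds (0:ℝ), HasDerivAt g (g1 x) x)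
    (h2 : HasDerivAt g1 g2 0) :
    deriv (deriv fun x => (c + ((g x).re * (g x).re + (g x).im * (g x).im)) ^ 2) 0 =
      2 * (2 * (g 0).re * (g1 0).re + 2 * (g 0).im * (g1 0).im) ^ 2 +
        2 * (c + ((g 0).re * (g 0).re + (g 0).im * (g 0).im)) *
          (2 * ((g1 0).re * (g1 0).re) + 2 * ((g 0).re * g2.re) +
            (2 * ((g1 0).im * (g1 0).im) + 2 * ((g 0).im * g2.im))) := by
  have hA : ∀ᶠ x in nhds (0:ℝ), HasDerivAt (fun t => (g t).re * (g t).re + (g t).im * (g t).im)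
      ((fun t => 2 * (g t).re * (g1 t).re + 2 * (g t).im * (g1 t).im) x) x := by
    filter_upwards [h1] with x hx
    have h := ((hasDerivAt_re' hx).fun_mul (hasDerivAt_re' hx)).fun_add
      ((hasDerivAt_im' hx).fun_mul (hasDerivAt_im' hx))
    refine h.congr_deriv ?_
    ring
  have hg0 := hasDerivAt_re' h1.self_of_nhds
  have hg10 := hasDerivAt_re' h2
  have hh0 := hasDerivAt_im' h1.self_of_nhds
  have hh10 := hasDerivAt_im' h2
  have hA1 : HasDerivAt (fun t => 2 * (g t).re * (g1 t).re + 2 * (g t).im * (g1 t).im)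
      (2 * ((g1 0).re * (g1 0).re) + 2 * ((g 0).re * g2.re) +
        (2 * ((g1 0).im * (g1 0).im) + 2 * ((g 0).im * g2.im))) 0 := by
    have h := ((hg0.const_mul 2).fun_mul hg10).fun_add ((hh0.const_mul 2).fun_mul hh10)
    refine h.congr_deriv ?_
    ring
  exact sd c _ _ _ hA hA1

/-- For `f = u + iv` holomorphic on the unit disk and `ε > 0`, with
`F_ε = (4ε/3 + |f|²)²`, `U_ε = (ε + u²)²`, `V_ε = (ε + v²)²`, one has
`Δ U_ε + Δ V_ε = (3/4) Δ F_ε` on the disk. -/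
theorem laplacian_identity_p_four (f : ℂ → ℂ)
    (hf : DifferentiableOn ℂ f (ball (0 : ℂ) 1)) (ε : ℝ) (hε : 0 < ε) :
    ∀ z ∈ ball (0 : ℂ) 1,
      planarLaplacian (fun w => (ε + (f w).re ^ 2) ^ 2) z +
        planarLaplacian (fun w => (ε + (f w).im ^ 2) ^ 2) z =
      3 / 4 * planarLaplacian (fun w => (4 / 3 * ε + ‖f w‖ ^ 2) ^ 2) z := by
  intro z hz
  obtain ⟨δ, hδ, hball⟩ := Metric.isOpen_iff.mp isOpen_ball z hz
  have hfa := hf.analyticOnNhd isOpen_ball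
  have hd : DifferentiableOn ℂ (deriv f) (ball (0:ℂ) 1) := hfa.deriv.differentiableOn
  have H1 : ∀ w ∈ ball (0:ℂ) 1, HasDerivAt f (deriv f w) w := fun w hw =>
    (hf.differentiableAt (isOpen_ball.mem_nhds hw)).hasDerivAt
  have H2 : HasDerivAt (deriv f) (deriv (deriv f) z) z :=
    (hd.differentiableAt (isOpen_ball.mem_nhds hz)).hasDerivAt
  have hx_mem : ∀ᶠ x : ℝ in nhds 0, z + (x : ℂ) ∈ ball (0:ℂ) 1 := by
    filter_upwards [Metric.ball_mem_nhds (0:ℝ) hδ] with x hx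
    apply hball
    simp only [mem_ball] at hx ⊢
    simpa [Complex.dist_eq] using hx
  have hy_mem : ∀ᶠ y : ℝ in nhds 0, z + (y : ℂ) * I ∈ ball (0:ℂ) 1 := by
    filter_upwards [Metric.ball_mem_nhds (0:ℝ) hδ] with y hy
    apply hball
    simp only [mem_ball] at hy ⊢
    simpa [Complex.dist_eq, Complex.norm_def, Complex.normSq_apply, abs_mul] using hy
  have hgx : ∀ᶠ x : ℝ in nhds 0,
      HasDerivAt (fun t : ℝ => f (z + (t:ℂ))) (deriv f (z + (x:ℂ))) x := by
    filter_upwards [hx_mem] with x hx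
    have h : HasDerivAt (fun w : ℂ => f (z + w)) (deriv f (z + (x:ℂ))) (x:ℂ) := by
      simpa [Function.comp_def] using (H1 _ hx).comp (x:ℂ) ((hasDerivAt_id (x:ℂ)).const_add z)
    exact h.comp_ofReal
  have hgx1 : HasDerivAt (fun t : ℝ => deriv f (z + (t:ℂ))) (deriv (deriv f) z) 0 := by
    have H2' : HasDerivAt (deriv f) (deriv (deriv f) z) (z + ((0:ℝ):ℂ)) := by
      rw [show z + ((0:ℝ):ℂ) = z by simp]; exact H2
    have h : HasDerivAt (fun w : ℂ => deriv f (z + w)) (deriv (deriv f) z) (((0:ℝ):ℂ)) := by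
      simpa [Function.comp_def] using H2'.comp (((0:ℝ):ℂ)) ((hasDerivAt_id (((0:ℝ):ℂ))).const_add z)
    exact h.comp_ofReal
  have hgy : ∀ᶠ y : ℝ in nhds 0,
      HasDerivAt (fun t : ℝ => f (z + (t:ℂ) * I)) (deriv f (z + (y:ℂ) * I) * I) y := by
    filter_upwards [hy_mem] with y hy
    have h : HasDerivAt (fun w : ℂ => f (z + w * I)) (deriv f (z + (y:ℂ) * I) * I) ((y:ℂ)) := by
      simpa [Function.comp_def] using (H1 _ hy).comp ((y:ℂ)) (((hasDerivAt_id ((y:ℂ))).mul_const I).const_add z)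
    exact h.comp_ofReal
  have hgy1 : HasDerivAt (fun t : ℝ => deriv f (z + (t:ℂ) * I) * I)
      (-(deriv (deriv f) z)) 0 := by
    have H2' : HasDerivAt (deriv f) (deriv (deriv f) z) (z + ((0:ℝ):ℂ) * I) := by
      rw [show z + ((0:ℝ):ℂ) * I = z by simp]; exact H2
    have h : HasDerivAt (fun w : ℂ => deriv f (z + w * I)) (deriv (deriv f) z * I)
        (((0:ℝ):ℂ)) := by
      simpa [Function.comp_def] using H2'.comp (((0:ℝ):ℂ)) (((hasDerivAt_id (((0:ℝ):ℂ))).mul_const I).const_add z)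
    have h2 := (h.comp_ofReal).mul_const I
    have e : deriv (deriv f) z * I * I = -(deriv (deriv f) z) := by
      rw [mul_assoc, Complex.I_mul_I, mul_neg_one]
    rwa [e] at h2
  -- second derivatives
  have hUx := dirU ε (fun t : ℝ => f (z + (t:ℂ))) (fun t : ℝ => deriv f (z + (t:ℂ)))
    (deriv (deriv f) z) hgx hgx1
  have hUy := dirU ε (fun t : ℝ => f (z + (t:ℂ) * I))
    (fun t : ℝ => deriv f (z + (t:ℂ) * I) * I) (-(deriv (deriv f) z)) hgy hgy1
  have hVx := dirV ε (fun t : ℝ => f (z + (t:ℂ))) (fun t : ℝ => deriv f (z + (t:ℂ)))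
    (deriv (deriv f) z) hgx hgx1
  have hVy := dirV ε (fun t : ℝ => f (z + (t:ℂ) * I))
    (fun t : ℝ => deriv f (z + (t:ℂ) * I) * I) (-(deriv (deriv f) z)) hgy hgy1
  have hFx := dirF (4 / 3 * ε) (fun t : ℝ => f (z + (t:ℂ))) (fun t : ℝ => deriv f (z + (t:ℂ)))
    (deriv (deriv f) z) hgx hgx1
  have hFy := dirF (4 / 3 * ε) (fun t : ℝ => f (z + (t:ℂ) * I))
    (fun t : ℝ => deriv f (z + (t:ℂ) * I) * I) (-(deriv (deriv f) z)) hgy hgy1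
  simp only [Complex.ofReal_zero, add_zero, zero_mul, Complex.mul_I_re, Complex.mul_I_im,
    Complex.neg_re, Complex.neg_im] at hUx hUy hVx hVy hFx hFy
  simp only [planarLaplacian, Complex.sq_norm, Complex.normSq_apply]
  rw [hUx, hUy, hVx, hVy, hFx, hFy]
  ring
end

section
/- Let $f = u+iv$ be holomorphic on the unit disk, $p \geq 4$, $q = p/(p-1)$, $\epsilon > 0$. Set $F_\epsilon = (q\epsilon + |f|^2)^{p/2}$, $U_\epsilon = (\epsilon + u^2)^{p/2}$, $V_\epsilon = (\epsilon + v^2)^{p/2}$. Then $\Delta(U_\epsilon + V_\epsilon) \leq \frac{p-1}{p}\Delta F_\epsilon$ pointwise on the disk. -/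
open Complex Metric

-- block: first derivative of (c + a t^2)^(p/2)
lemma block {p c : ℝ} (hc : 0 < c) {a a' : ℝ → ℝ} {t : ℝ} (ha : HasDerivAt a (a' t) t) :
    HasDerivAt (fun s => (c + a s ^ 2) ^ (p / 2))
      (p * ((c + a t ^ 2) ^ (p / 2 - 1) * (a t * a' t))) t := by
  have h := ((ha.pow 2).const_add c).rpow_const (p := p / 2)
      (Or.inl (by simp only [Pi.pow_apply, Pi.add_apply]; positivity))
  simp only [Pi.pow_apply, Pi.add_apply] at h
  convert h using 1
  push_cast
  ring

-- block2 : first derivative of (c + (a t^2 + b t^2))^(p/2)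
lemma block2 {p c : ℝ} (hc : 0 < c) {a b a' b' : ℝ → ℝ} {t : ℝ}
    (ha : HasDerivAt a (a' t) t) (hb : HasDerivAt b (b' t) t) :
    HasDerivAt (fun s => (c + (a s ^ 2 + b s ^ 2)) ^ (p / 2))
      (p * ((c + (a t ^ 2 + b t ^ 2)) ^ (p / 2 - 1) * (a t * a' t + b t * b' t))) t := by
  have h := (((ha.pow 2).add (hb.pow 2)).const_add c).rpow_const (p := p / 2)
      (Or.inl (by simp only [Pi.pow_apply, Pi.add_apply]; positivity))
  simp only [Pi.pow_apply, Pi.add_apply] at h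
  convert h using 1
  push_cast
  ring

-- second derivative value of the block at 0
lemma blockD {p c : ℝ} (hc : 0 < c) {a a' : ℝ → ℝ} {a'' : ℝ}
    (ha : HasDerivAt a (a' 0) 0) (ha' : HasDerivAt a' a'' 0) :
    HasDerivAt (fun t => p * ((c + a t ^ 2) ^ (p / 2 - 1) * (a t * a' t)))
      (p * (c + a 0 ^ 2) ^ (p / 2 - 2) *
        ((p - 2) * (a 0 * a' 0) ^ 2 + (c + a 0 ^ 2) * (a' 0 ^ 2 + a 0 * a''))) 0 := by
  have h1 : HasDerivAt (fun t => (c + a t ^ 2) ^ (p / 2 - 1))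
      ((2 : ℕ) * a 0 ^ (2 - 1) * a' 0 * (p / 2 - 1) * (c + a 0 ^ 2) ^ (p / 2 - 1 - 1)) 0 :=
    ((ha.pow 2).const_add c).rpow_const (Or.inl (by simp only [Pi.pow_apply, Pi.add_apply]; positivity))
  have h2 : HasDerivAt (fun t => a t * a' t) (a' 0 * a' 0 + a 0 * a'') 0 := ha.mul ha'
  have h : HasDerivAt (fun t => p * ((c + a t ^ 2) ^ (p / 2 - 1) * (a t * a' t))) _ 0 :=
    (h1.mul h2).const_mul p
  convert h using 1
  have e1 : p / 2 - 1 - 1 = p / 2 - 2 := by ring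
  have e2 : (c + a 0 ^ 2) ^ (p / 2 - 1) = (c + a 0 ^ 2) ^ (p / 2 - 2) * (c + a 0 ^ 2) := by
    rw [show p / 2 - 1 = (p / 2 - 2) + 1 by ring, Real.rpow_add (by positivity), Real.rpow_one]
  rw [e1, e2]
  push_cast
  ring

lemma blockD2 {p c : ℝ} (hc : 0 < c) {a b a' b' : ℝ → ℝ} {a'' b'' : ℝ}
    (ha : HasDerivAt a (a' 0) 0) (hb : HasDerivAt b (b' 0) 0)
    (ha' : HasDerivAt a' a'' 0) (hb' : HasDerivAt b' b'' 0) :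
    HasDerivAt (fun t => p * ((c + (a t ^ 2 + b t ^ 2)) ^ (p / 2 - 1) * (a t * a' t + b t * b' t)))
      (p * (c + (a 0 ^ 2 + b 0 ^ 2)) ^ (p / 2 - 2) *
        ((p - 2) * (a 0 * a' 0 + b 0 * b' 0) ^ 2 +
          (c + (a 0 ^ 2 + b 0 ^ 2)) * (a' 0 ^ 2 + b' 0 ^ 2 + a 0 * a'' + b 0 * b''))) 0 := by
  have h1 : HasDerivAt (fun t => (c + (a t ^ 2 + b t ^ 2)) ^ (p / 2 - 1))
      (((2 : ℕ) * a 0 ^ (2 - 1) * a' 0 + (2 : ℕ) * b 0 ^ (2 - 1) * b' 0) * (p / 2 - 1) *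
        (c + (a 0 ^ 2 + b 0 ^ 2)) ^ (p / 2 - 1 - 1)) 0 :=
    (((ha.pow 2).add (hb.pow 2)).const_add c).rpow_const (Or.inl (by simp only [Pi.pow_apply, Pi.add_apply]; positivity))
  have h2 : HasDerivAt (fun t => a t * a' t + b t * b' t)
      ((a' 0 * a' 0 + a 0 * a'') + (b' 0 * b' 0 + b 0 * b'')) 0 := (ha.mul ha').add (hb.mul hb')
  have h : HasDerivAt
      (fun t => p * ((c + (a t ^ 2 + b t ^ 2)) ^ (p / 2 - 1) * (a t * a' t + b t * b' t))) _ 0 :=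
    (h1.mul h2).const_mul p
  convert h using 1
  have e1 : p / 2 - 1 - 1 = p / 2 - 2 := by ring
  have e2 : (c + (a 0 ^ 2 + b 0 ^ 2)) ^ (p / 2 - 1)
      = (c + (a 0 ^ 2 + b 0 ^ 2)) ^ (p / 2 - 2) * (c + (a 0 ^ 2 + b 0 ^ 2)) := by
    rw [show p / 2 - 1 = (p / 2 - 2) + 1 by ring, Real.rpow_add (by positivity), Real.rpow_one]
  rw [e1, e2]
  push_cast
  ring

lemma dd_eq {h H : ℝ → ℝ} {δ : ℝ} (hδ : 0 < δ)
    (hH : ∀ t : ℝ, |t| < δ → HasDerivAt h (H t) t) {D : ℝ} (hD : HasDerivAt H D 0) :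
    deriv (deriv h) 0 = D := by
  have hev : deriv h =ᶠ[nhds (0 : ℝ)] H := by
    have hball : ∀ᶠ t in nhds (0 : ℝ), |t| < δ := by
      filter_upwards [Metric.ball_mem_nhds (0 : ℝ) hδ] with t ht
      simpa [Real.dist_eq] using ht
    filter_upwards [hball] with t ht
    exact (hH t ht).deriv
  rw [hev.deriv_eq, hD.deriv]

lemma dd_sum {p c : ℝ} (hc : 0 < c) {δ : ℝ} (hδ : 0 < δ) {a b a' b' : ℝ → ℝ} {a'' b'' : ℝ}
    (ha : ∀ t : ℝ, |t| < δ → HasDerivAt a (a' t) t)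
    (hb : ∀ t : ℝ, |t| < δ → HasDerivAt b (b' t) t)
    (ha' : HasDerivAt a' a'' 0) (hb' : HasDerivAt b' b'' 0) :
    deriv (deriv fun t => (c + a t ^ 2) ^ (p / 2) + (c + b t ^ 2) ^ (p / 2)) 0
      = p * (c + a 0 ^ 2) ^ (p / 2 - 2) *
          ((p - 2) * (a 0 * a' 0) ^ 2 + (c + a 0 ^ 2) * (a' 0 ^ 2 + a 0 * a''))
      + p * (c + b 0 ^ 2) ^ (p / 2 - 2) *
          ((p - 2) * (b 0 * b' 0) ^ 2 + (c + b 0 ^ 2) * (b' 0 ^ 2 + b 0 * b'')) := by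
  exact dd_eq hδ
    (fun t ht => (block hc (ha t ht)).add (block hc (hb t ht)))
    ((blockD hc (ha 0 (by simpa using hδ)) ha').add (blockD hc (hb 0 (by simpa using hδ)) hb'))

lemma dd_two {p c : ℝ} (hc : 0 < c) {δ : ℝ} (hδ : 0 < δ) {a b a' b' : ℝ → ℝ} {a'' b'' : ℝ}
    (ha : ∀ t : ℝ, |t| < δ → HasDerivAt a (a' t) t)
    (hb : ∀ t : ℝ, |t| < δ → HasDerivAt b (b' t) t)
    (ha' : HasDerivAt a' a'' 0) (hb' : HasDerivAt b' b'' 0) :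
    deriv (deriv fun t => (c + (a t ^ 2 + b t ^ 2)) ^ (p / 2)) 0
      = p * (c + (a 0 ^ 2 + b 0 ^ 2)) ^ (p / 2 - 2) *
          ((p - 2) * (a 0 * a' 0 + b 0 * b' 0) ^ 2 +
            (c + (a 0 ^ 2 + b 0 ^ 2)) * (a' 0 ^ 2 + b' 0 ^ 2 + a 0 * a'' + b 0 * b'')) :=
  dd_eq hδ (fun t ht => block2 hc (ha t ht) (hb t ht))
    (blockD2 hc (ha 0 (by simpa using hδ)) (hb 0 (by simpa using hδ)) ha' hb')

/-- For `f = u+iv` holomorphic on the unit disk, `p ≥ 4`, `q = p/(p-1)`, `ε > 0`, with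
`F_ε = (qε + |f|²)^{p/2}`, `U_ε = (ε + u²)^{p/2}`, `V_ε = (ε + v²)^{p/2}`:
`Δ(U_ε + V_ε) ≤ ((p-1)/p) Δ F_ε` pointwise on the disk. -/
theorem laplacian_comparison_ge_four (f : ℂ → ℂ)
    (hf : DifferentiableOn ℂ f (ball (0 : ℂ) 1))
    (p q : ℝ) (hp : 4 ≤ p) (hq : q = p / (p - 1)) (ε : ℝ) (hε : 0 < ε) :
    ∀ z ∈ ball (0 : ℂ) 1,
      planarLaplacian (fun w => (ε + (f w).re ^ 2) ^ (p / 2) + (ε + (f w).im ^ 2) ^ (p / 2)) z ≤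
        (p - 1) / p *
          planarLaplacian (fun w => (q * ε + ‖f w‖ ^ 2) ^ (p / 2)) z := by
  intro z hz
  -- basic positivity facts
  have hp1 : (0 : ℝ) < p - 1 := by linarith
  have hp0 : (0 : ℝ) < p := by linarith
  have hq1 : 1 ≤ q := by
    rw [hq, le_div_iff₀ hp1]; linarith
  have hqε : 0 < q * ε := by nlinarith
  -- a small ball around z inside the unit ball
  obtain ⟨δ, hδ, hball⟩ : ∃ δ > 0, ball z δ ⊆ ball (0 : ℂ) 1 :=
    Metric.mem_nhds_iff.mp (isOpen_ball.mem_nhds hz)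
  have hmemx : ∀ t : ℝ, |t| < δ → z + (t : ℂ) ∈ ball (0 : ℂ) 1 := by
    intro t ht
    apply hball
    have : dist (z + (t : ℂ)) z = |t| := by
      rw [Complex.dist_eq]; simp
    rw [Metric.mem_ball, this]; exact ht
  have hmemy : ∀ t : ℝ, |t| < δ → z + (t : ℂ) * I ∈ ball (0 : ℂ) 1 := by
    intro t ht
    apply hball
    have : dist (z + (t : ℂ) * I) z = |t| := by
      rw [Complex.dist_eq]; simp
    rw [Metric.mem_ball, this]; exact ht
  -- analyticity and derivatives of f
  have hA : AnalyticOnNhd ℂ f (ball (0 : ℂ) 1) := hf.analyticOnNhd isOpen_ball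
  have hA' : AnalyticOnNhd ℂ (deriv f) (ball (0 : ℂ) 1) := hA.deriv
  have hf1 : ∀ w ∈ ball (0 : ℂ) 1, HasDerivAt f (deriv f w) w :=
    fun w hw => (hA w hw).differentiableAt.hasDerivAt
  have hf2 : ∀ w ∈ ball (0 : ℂ) 1, HasDerivAt (deriv f) (deriv (deriv f) w) w :=
    fun w hw => (hA' w hw).differentiableAt.hasDerivAt
  -- directional chains
  have chainx : ∀ (g : ℂ → ℂ) (t : ℝ) (d : ℂ), HasDerivAt g d (z + (t : ℂ)) →
      HasDerivAt (fun s : ℝ => g (z + (s : ℂ))) d t := by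
    intro g t d hg
    have h0 : HasDerivAt (fun w : ℂ => z + w) 1 (t : ℂ) := (hasDerivAt_id _).const_add z
    have h1 := (HasDerivAt.comp ((t : ℝ) : ℂ) hg h0).comp_ofReal
    simpa [Function.comp] using h1
  have chainy : ∀ (g : ℂ → ℂ) (t : ℝ) (d : ℂ), HasDerivAt g d (z + (t : ℂ) * I) →
      HasDerivAt (fun s : ℝ => g (z + (s : ℂ) * I)) (d * I) t := by
    intro g t d hg
    have h0 : HasDerivAt (fun w : ℂ => z + w * I) I (t : ℂ) := by
      simpa using ((hasDerivAt_id ((t : ℝ) : ℂ)).mul_const I).const_add z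
    have h1 := (HasDerivAt.comp ((t : ℝ) : ℂ) hg h0).comp_ofReal
    simpa [Function.comp] using h1
  -- component derivatives, x-direction
  have hax : ∀ t : ℝ, |t| < δ → HasDerivAt (fun s : ℝ => (f (z + (s : ℂ))).re)
      ((deriv f (z + (t : ℂ))).re) t := by
    intro t ht
    simpa only [Function.comp_def, Complex.reCLM_apply] using
      Complex.reCLM.hasFDerivAt.comp_hasDerivAt t (chainx f t _ (hf1 _ (hmemx t ht)))
  have hbx : ∀ t : ℝ, |t| < δ → HasDerivAt (fun s : ℝ => (f (z + (s : ℂ))).im)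
      ((deriv f (z + (t : ℂ))).im) t := by
    intro t ht
    simpa only [Function.comp_def, Complex.imCLM_apply] using
      Complex.imCLM.hasFDerivAt.comp_hasDerivAt t (chainx f t _ (hf1 _ (hmemx t ht)))
  -- component derivatives, y-direction
  have hay : ∀ t : ℝ, |t| < δ → HasDerivAt (fun s : ℝ => (f (z + (s : ℂ) * I)).re)
      ((deriv f (z + (t : ℂ) * I) * I).re) t := by
    intro t ht
    simpa only [Function.comp_def, Complex.reCLM_apply] using
      Complex.reCLM.hasFDerivAt.comp_hasDerivAt t (chainy f t _ (hf1 _ (hmemy t ht)))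
  have hby : ∀ t : ℝ, |t| < δ → HasDerivAt (fun s : ℝ => (f (z + (s : ℂ) * I)).im)
      ((deriv f (z + (t : ℂ) * I) * I).im) t := by
    intro t ht
    simpa only [Function.comp_def, Complex.imCLM_apply] using
      Complex.imCLM.hasFDerivAt.comp_hasDerivAt t (chainy f t _ (hf1 _ (hmemy t ht)))
  have h0δ : |(0 : ℝ)| < δ := by simpa using hδ
  -- second-level derivatives at 0, x-direction
  have hcx : HasDerivAt (fun s : ℝ => deriv f (z + (s : ℂ))) (deriv (deriv f) z) 0 := by
    have h := chainx (deriv f) 0 _ (hf2 _ (hmemx 0 h0δ))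
    simpa only [Complex.ofReal_zero, add_zero] using h
  have ha'x : HasDerivAt (fun t : ℝ => (deriv f (z + (t : ℂ))).re) ((deriv (deriv f) z).re) 0 := by
    simpa only [Function.comp_def, Complex.reCLM_apply] using
      Complex.reCLM.hasFDerivAt.comp_hasDerivAt 0 hcx
  have hb'x : HasDerivAt (fun t : ℝ => (deriv f (z + (t : ℂ))).im) ((deriv (deriv f) z).im) 0 := by
    simpa only [Function.comp_def, Complex.imCLM_apply] using
      Complex.imCLM.hasFDerivAt.comp_hasDerivAt 0 hcx
  -- second-level derivatives at 0, y-direction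
  have hcy : HasDerivAt (fun s : ℝ => deriv f (z + (s : ℂ) * I) * I)
      (deriv (deriv f) z * I * I) 0 := by
    have h := (chainy (deriv f) 0 _ (hf2 _ (hmemy 0 h0δ))).mul_const I
    simpa only [Complex.ofReal_zero, zero_mul, add_zero] using h
  have ha'y : HasDerivAt (fun t : ℝ => (deriv f (z + (t : ℂ) * I) * I).re)
      ((deriv (deriv f) z * I * I).re) 0 := by
    simpa only [Function.comp_def, Complex.reCLM_apply] using
      Complex.reCLM.hasFDerivAt.comp_hasDerivAt 0 hcy
  have hb'y : HasDerivAt (fun t : ℝ => (deriv f (z + (t : ℂ) * I) * I).im)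
      ((deriv (deriv f) z * I * I).im) 0 := by
    simpa only [Function.comp_def, Complex.imCLM_apply] using
      Complex.imCLM.hasFDerivAt.comp_hasDerivAt 0 hcy
  -- the four second derivatives
  have e1x := dd_sum (p := p) hε hδ hax hbx ha'x hb'x
  have e1y := dd_sum (p := p) hε hδ hay hby ha'y hb'y
  have e2x := dd_two (p := p) hqε hδ hax hbx ha'x hb'x
  have e2y := dd_two (p := p) hqε hδ hay hby ha'y hb'y
  simp only [Complex.ofReal_zero, add_zero] at e1x e2x
  simp only [Complex.ofReal_zero, zero_mul, add_zero] at e1y e2y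
  -- rewrite |f|^2 in terms of re and im
  have habs : (fun w => (q * ε + ‖f w‖ ^ 2) ^ (p / 2))
      = fun w => (q * ε + ((f w).re ^ 2 + (f w).im ^ 2)) ^ (p / 2) := by
    funext w
    rw [Complex.sq_norm, Complex.normSq_apply]
    congr 1
    ring
  rw [habs]
  simp only [planarLaplacian]
  rw [e1x, e1y, e2x, e2y]
  simp only [Complex.mul_I_re, Complex.mul_I_im]
  -- abbreviations
  have hqp : q * (p - 1) = p := by
    rw [hq]; field_simp
  have hu := sq_nonneg ((f z).re)
  have hv := sq_nonneg ((f z).im)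
  have hεq : ε ≤ q * ε := le_mul_of_one_le_left hε.le hq1
  have hXS : ε + (f z).re ^ 2 ≤ q * ε + ((f z).re ^ 2 + (f z).im ^ 2) := by linarith
  have hYS : ε + (f z).im ^ 2 ≤ q * ε + ((f z).re ^ 2 + (f z).im ^ 2) := by linarith
  have he : (0 : ℝ) ≤ p / 2 - 2 := by linarith
  have hAC : (ε + (f z).re ^ 2) ^ (p / 2 - 2)
      ≤ (q * ε + ((f z).re ^ 2 + (f z).im ^ 2)) ^ (p / 2 - 2) :=
    Real.rpow_le_rpow (by positivity) hXS he
  have hBC : (ε + (f z).im ^ 2) ^ (p / 2 - 2)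
      ≤ (q * ε + ((f z).re ^ 2 + (f z).im ^ 2)) ^ (p / 2 - 2) :=
    Real.rpow_le_rpow (by positivity) hYS he
  have hM : (0 : ℝ) ≤ (deriv f z).re ^ 2 + (deriv f z).im ^ 2 := by positivity
  have hK1 : (0 : ℝ) ≤ ε + (p - 1) * (f z).re ^ 2 := by
    have := mul_nonneg hp1.le hu; linarith
  have hK2 : (0 : ℝ) ≤ ε + (p - 1) * (f z).im ^ 2 := by
    have := mul_nonneg hp1.le hv; linarith
  rw [div_mul_eq_mul_div, le_div_iff₀ hp0]
  have h1 : p * ((ε + (f z).re ^ 2) ^ (p / 2 - 2)) *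
        (((deriv f z).re ^ 2 + (deriv f z).im ^ 2) * (ε + (p - 1) * (f z).re ^ 2))
      ≤ p * ((q * ε + ((f z).re ^ 2 + (f z).im ^ 2)) ^ (p / 2 - 2)) *
        (((deriv f z).re ^ 2 + (deriv f z).im ^ 2) * (ε + (p - 1) * (f z).re ^ 2)) :=
    mul_le_mul_of_nonneg_right (mul_le_mul_of_nonneg_left hAC hp0.le) (mul_nonneg hM hK1)
  have h2 : p * ((ε + (f z).im ^ 2) ^ (p / 2 - 2)) *
        (((deriv f z).re ^ 2 + (deriv f z).im ^ 2) * (ε + (p - 1) * (f z).im ^ 2))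
      ≤ p * ((q * ε + ((f z).re ^ 2 + (f z).im ^ 2)) ^ (p / 2 - 2)) *
        (((deriv f z).re ^ 2 + (deriv f z).im ^ 2) * (ε + (p - 1) * (f z).im ^ 2)) :=
    mul_le_mul_of_nonneg_right (mul_le_mul_of_nonneg_left hBC hp0.le) (mul_nonneg hM hK2)
  have hmain2 := mul_le_mul_of_nonneg_left (add_le_add h1 h2) hp0.le
  have hfix : 2 * ε * p * ((q * ε + ((f z).re ^ 2 + (f z).im ^ 2)) ^ (p / 2 - 2)) *
      ((deriv f z).re ^ 2 + (deriv f z).im ^ 2) * (q * (p - 1) - p) = 0 := by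
    rw [hqp]; ring
  linarith [hmain2, hfix]
end

section
/- Let $f = u+iv$ be holomorphic on the unit disk, $1 < p \leq 4$, $q = p/(p-1)$, $\epsilon > 0$. Set $F_\epsilon = (q\epsilon + |f|^2)^{p/2}$, $U_\epsilon = (\epsilon + u^2)^{p/2}$, $V_\epsilon = (\epsilon + v^2)^{p/2}$. Then $\Delta(U_\epsilon + V_\epsilon) \geq \frac{p-1}{p}\Delta F_\epsilon$ pointwise on the disk. -/
open Complex Metric

lemma line_hasDerivAt_s7 {g : ℂ → ℂ} {z c : ℂ} {x : ℝ}
    (hg : DifferentiableAt ℂ g (z + x * c)) :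
    HasDerivAt (fun t : ℝ => g (z + t * c)) (c * deriv g (z + x * c)) x := by
  have h1 : HasDerivAt (fun t : ℝ => z + (t : ℂ) * c) c x := by
    simpa using ((Complex.ofRealCLM.hasDerivAt (x := x)).mul_const c).const_add z
  have h2 := (hg.hasDerivAt.hasFDerivAt.restrictScalars ℝ).comp_hasDerivAt x h1
  simpa [Function.comp_def, smul_eq_mul, mul_comm] using h2

lemma lineRe_hasDerivAt (ℓ : ℂ →L[ℝ] ℝ) {g : ℂ → ℂ} {z c : ℂ} {x : ℝ}
    (hg : DifferentiableAt ℂ g (z + x * c)) :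
    HasDerivAt (fun t : ℝ => ℓ (g (z + t * c))) (ℓ (c * deriv g (z + x * c))) x :=
  (ℓ.hasFDerivAt).comp_hasDerivAt x (line_hasDerivAt_s7 hg)

/-- first derivative of a `(ε + ℓ(f)^2)^pp` term along a line -/
lemma term_hasDerivAt (ℓ : ℂ →L[ℝ] ℝ) {f : ℂ → ℂ} {z c : ℂ} {x : ℝ}
    (hf : DifferentiableAt ℂ f (z + x * c)) {ε : ℝ} (pp : ℝ) (hε : 0 < ε) :
    HasDerivAt (fun t : ℝ => (ε + (ℓ (f (z + t * c))) ^ 2) ^ pp)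
      (2 * ℓ (f (z + x * c)) * ℓ (c * deriv f (z + x * c)) * pp *
        (ε + (ℓ (f (z + x * c))) ^ 2) ^ (pp - 1)) x := by
  have hu := lineRe_hasDerivAt ℓ hf
  have hA := (hu.pow 2).const_add ε
  have hne : ε + (ℓ (f (z + x * c))) ^ 2 ≠ 0 := by positivity
  have := hA.rpow_const (p := pp) (Or.inl hne)
  convert this using 1
  · rfl
  simp only [Pi.pow_apply, Pi.add_apply, Pi.mul_apply]
  push_cast
  ring

/-- second derivative value of the term at `x = 0` -/
lemma term_deriv1_hasDerivAt (ℓ : ℂ →L[ℝ] ℝ) {f : ℂ → ℂ} {z c : ℂ}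
    (hf : DifferentiableAt ℂ f z) (hf' : DifferentiableAt ℂ (deriv f) z)
    {ε : ℝ} (pp : ℝ) (hε : 0 < ε) :
    HasDerivAt (fun t : ℝ => 2 * ℓ (f (z + t * c)) * ℓ (c * deriv f (z + t * c)) * pp *
        (ε + (ℓ (f (z + t * c))) ^ 2) ^ (pp - 1))
      (((2 * ℓ (c * deriv f z) ^ 2 + 2 * ℓ (f z) * ℓ (c * (c * deriv (deriv f) z))) * pp *
          (ε + (ℓ (f z)) ^ 2) ^ (pp - 1)) +
        (2 * ℓ (f z) * ℓ (c * deriv f z)) * pp *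
          ((2 * ℓ (f z) * ℓ (c * deriv f z)) * (pp - 1) * (ε + (ℓ (f z)) ^ 2) ^ (pp - 2))) 0 := by
  have hz : z + (0 : ℝ) * c = z := by simp
  have hf0 : DifferentiableAt ℂ f (z + (0:ℝ) * c) := by rw [hz]; exact hf
  have hf'0 : DifferentiableAt ℂ (deriv f) (z + (0:ℝ) * c) := by rw [hz]; exact hf'
  have hu := lineRe_hasDerivAt ℓ (c := c) hf0
  have hline' := line_hasDerivAt_s7 (g := deriv f) (c := c) hf'0
  have hu1 : HasDerivAt (fun t : ℝ => ℓ (c * deriv f (z + t * c)))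
      (ℓ (c * (c * deriv (deriv f) (z + (0:ℝ) * c)))) 0 := by
    have := (hline'.const_mul c)
    have h2 := (ℓ.hasFDerivAt).comp_hasDerivAt (0 : ℝ) this
    simpa [Function.comp_def, mul_left_comm, mul_assoc] using h2
  have hA := (hu.pow 2).const_add ε
  have hne : ε + (ℓ (f (z + (0:ℝ) * c))) ^ 2 ≠ 0 := by positivity
  have hApow := hA.rpow_const (p := pp - 1) (Or.inl hne)
  have hprod := (((hu.const_mul 2).mul hu1).mul_const pp).mul hApow
  rw [hz] at hprod
  convert hprod using 1
  · rfl
  · rfl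
  · rfl
  rw [show pp - 1 - 1 = pp - 2 by ring]
  simp only [Pi.pow_apply, Pi.add_apply, Pi.mul_apply]
  push_cast
  ring

/-- first derivative of the `(qε + |f|²)^pp` term along a line -/
lemma termF_hasDerivAt {f : ℂ → ℂ} {z c : ℂ} {x : ℝ}
    (hf : DifferentiableAt ℂ f (z + x * c)) {d : ℝ} (pp : ℝ) (hd : 0 < d) :
    HasDerivAt (fun t : ℝ => (d + ((f (z + t * c)).re ^ 2 + (f (z + t * c)).im ^ 2)) ^ pp)
      ((2 * (f (z + x * c)).re * (c * deriv f (z + x * c)).re +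
        2 * (f (z + x * c)).im * (c * deriv f (z + x * c)).im) * pp *
        (d + ((f (z + x * c)).re ^ 2 + (f (z + x * c)).im ^ 2)) ^ (pp - 1)) x := by
  have hu := lineRe_hasDerivAt Complex.reCLM hf
  have hv := lineRe_hasDerivAt Complex.imCLM hf
  have hB := ((hu.pow 2).add (hv.pow 2)).const_add d
  have hne : d + ((f (z + x * c)).re ^ 2 + (f (z + x * c)).im ^ 2) ≠ 0 := by positivity
  have := hB.rpow_const (p := pp) (Or.inl hne)
  convert this using 1
  · rfl
  simp only [Pi.pow_apply, Pi.add_apply, Pi.mul_apply]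
  push_cast
  simp only [Complex.reCLM_apply, Complex.imCLM_apply]
  ring

lemma termF_deriv1_hasDerivAt {f : ℂ → ℂ} {z c : ℂ}
    (hf : DifferentiableAt ℂ f z) (hf' : DifferentiableAt ℂ (deriv f) z)
    {d : ℝ} (pp : ℝ) (hd : 0 < d) :
    HasDerivAt (fun t : ℝ => (2 * (f (z + t * c)).re * (c * deriv f (z + t * c)).re +
        2 * (f (z + t * c)).im * (c * deriv f (z + t * c)).im) * pp *
        (d + ((f (z + t * c)).re ^ 2 + (f (z + t * c)).im ^ 2)) ^ (pp - 1))
      (((2 * (c * deriv f z).re ^ 2 + 2 * (f z).re * (c * (c * deriv (deriv f) z)).re +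
          (2 * (c * deriv f z).im ^ 2 + 2 * (f z).im * (c * (c * deriv (deriv f) z)).im)) * pp *
          (d + ((f z).re ^ 2 + (f z).im ^ 2)) ^ (pp - 1)) +
        (2 * (f z).re * (c * deriv f z).re + 2 * (f z).im * (c * deriv f z).im) * pp *
          ((2 * (f z).re * (c * deriv f z).re + 2 * (f z).im * (c * deriv f z).im) * (pp - 1) *
            (d + ((f z).re ^ 2 + (f z).im ^ 2)) ^ (pp - 2))) 0 := by
  have hz : z + (0 : ℝ) * c = z := by simp
  have hf0 : DifferentiableAt ℂ f (z + (0:ℝ) * c) := by rw [hz]; exact hf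
  have hf'0 : DifferentiableAt ℂ (deriv f) (z + (0:ℝ) * c) := by rw [hz]; exact hf'
  have hu := lineRe_hasDerivAt Complex.reCLM (c := c) hf0
  have hv := lineRe_hasDerivAt Complex.imCLM (c := c) hf0
  have hline' := line_hasDerivAt_s7 (g := deriv f) (c := c) hf'0
  have hu1 : HasDerivAt (fun t : ℝ => Complex.reCLM (c * deriv f (z + t * c)))
      (Complex.reCLM (c * (c * deriv (deriv f) (z + (0:ℝ) * c)))) 0 := by
    have h2 := (Complex.reCLM.hasFDerivAt).comp_hasDerivAt (0 : ℝ) (hline'.const_mul c)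
    simpa [Function.comp_def, mul_left_comm, mul_assoc] using h2
  have hv1 : HasDerivAt (fun t : ℝ => Complex.imCLM (c * deriv f (z + t * c)))
      (Complex.imCLM (c * (c * deriv (deriv f) (z + (0:ℝ) * c)))) 0 := by
    have h2 := (Complex.imCLM.hasFDerivAt).comp_hasDerivAt (0 : ℝ) (hline'.const_mul c)
    simpa [Function.comp_def, mul_left_comm, mul_assoc] using h2
  have hB := ((hu.pow 2).add (hv.pow 2)).const_add d
  have hne : d + ((Complex.reCLM (f (z + (0:ℝ) * c))) ^ 2 + (Complex.imCLM (f (z + (0:ℝ) * c))) ^ 2) ≠ 0 := by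
    simp only [Complex.reCLM_apply, Complex.imCLM_apply]; positivity
  have hBpow := hB.rpow_const (p := pp - 1) (Or.inl hne)
  have hprod := ((((hu.const_mul 2).mul hu1).add ((hv.const_mul 2).mul hv1)).mul_const pp).mul hBpow
  rw [hz] at hprod
  convert hprod using 1
  · rfl
  · rfl
  · rfl
  rw [show pp - 1 - 1 = pp - 2 by ring]
  simp only [Pi.pow_apply, Pi.add_apply, Pi.mul_apply]
  push_cast
  simp only [Complex.reCLM_apply, Complex.imCLM_apply]
  ring

lemma lapUV_eq {f : ℂ → ℂ} {z c : ℂ} {ε : ℝ} (pp : ℝ)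
    (hfs : ∀ᶠ t : ℝ in nhds (0:ℝ), DifferentiableAt ℂ f (z + ↑t * c))
    (hf : DifferentiableAt ℂ f z) (hf' : DifferentiableAt ℂ (deriv f) z) (hε : 0 < ε) :
    deriv (deriv fun t : ℝ =>
        (ε + (f (z + ↑t * c)).re ^ 2) ^ pp + (ε + (f (z + ↑t * c)).im ^ 2) ^ pp) 0 =
      (((2 * (c * deriv f z).re ^ 2 + 2 * (f z).re * (c * (c * deriv (deriv f) z)).re) * pp *
          (ε + (f z).re ^ 2) ^ (pp - 1)) +
        (2 * (f z).re * (c * deriv f z).re) * pp *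
          ((2 * (f z).re * (c * deriv f z).re) * (pp - 1) * (ε + (f z).re ^ 2) ^ (pp - 2))) +
      (((2 * (c * deriv f z).im ^ 2 + 2 * (f z).im * (c * (c * deriv (deriv f) z)).im) * pp *
          (ε + (f z).im ^ 2) ^ (pp - 1)) +
        (2 * (f z).im * (c * deriv f z).im) * pp *
          ((2 * (f z).im * (c * deriv f z).im) * (pp - 1) * (ε + (f z).im ^ 2) ^ (pp - 2))) := by
  have hD : deriv (fun t : ℝ =>
        (ε + (f (z + ↑t * c)).re ^ 2) ^ pp + (ε + (f (z + ↑t * c)).im ^ 2) ^ pp) =ᶠ[nhds (0:ℝ)]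
      (fun t : ℝ =>
        (2 * (f (z + ↑t * c)).re * (c * deriv f (z + ↑t * c)).re * pp *
          (ε + (f (z + ↑t * c)).re ^ 2) ^ (pp - 1)) +
        (2 * (f (z + ↑t * c)).im * (c * deriv f (z + ↑t * c)).im * pp *
          (ε + (f (z + ↑t * c)).im ^ 2) ^ (pp - 1))) :=
    hfs.mono fun t ht =>
      ((term_hasDerivAt Complex.reCLM ht pp hε).add (term_hasDerivAt Complex.imCLM ht pp hε)).deriv
  exact hD.deriv_eq.trans
    (((term_deriv1_hasDerivAt Complex.reCLM hf hf' pp hε).add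
      (term_deriv1_hasDerivAt Complex.imCLM hf hf' pp hε)).deriv)

lemma lapF_eq {f : ℂ → ℂ} {z c : ℂ} {d : ℝ} (pp : ℝ)
    (hfs : ∀ᶠ t : ℝ in nhds (0:ℝ), DifferentiableAt ℂ f (z + ↑t * c))
    (hf : DifferentiableAt ℂ f z) (hf' : DifferentiableAt ℂ (deriv f) z) (hd : 0 < d) :
    deriv (deriv fun t : ℝ =>
        (d + ((f (z + ↑t * c)).re ^ 2 + (f (z + ↑t * c)).im ^ 2)) ^ pp) 0 =
      ((2 * (c * deriv f z).re ^ 2 + 2 * (f z).re * (c * (c * deriv (deriv f) z)).re +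
          (2 * (c * deriv f z).im ^ 2 + 2 * (f z).im * (c * (c * deriv (deriv f) z)).im)) * pp *
          (d + ((f z).re ^ 2 + (f z).im ^ 2)) ^ (pp - 1)) +
        (2 * (f z).re * (c * deriv f z).re + 2 * (f z).im * (c * deriv f z).im) * pp *
          ((2 * (f z).re * (c * deriv f z).re + 2 * (f z).im * (c * deriv f z).im) * (pp - 1) *
            (d + ((f z).re ^ 2 + (f z).im ^ 2)) ^ (pp - 2)) := by
  have hD : deriv (fun t : ℝ =>
        (d + ((f (z + ↑t * c)).re ^ 2 + (f (z + ↑t * c)).im ^ 2)) ^ pp) =ᶠ[nhds (0:ℝ)]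
      (fun t : ℝ =>
        (2 * (f (z + ↑t * c)).re * (c * deriv f (z + ↑t * c)).re +
          2 * (f (z + ↑t * c)).im * (c * deriv f (z + ↑t * c)).im) * pp *
          (d + ((f (z + ↑t * c)).re ^ 2 + (f (z + ↑t * c)).im ^ 2)) ^ (pp - 1)) :=
    hfs.mono fun t ht => (termF_hasDerivAt ht pp hd).deriv
  exact hD.deriv_eq.trans ((termF_deriv1_hasDerivAt hf hf' pp hd).deriv)

set_option maxHeartbeats 1000000 in
theorem laplacian_comparison_le_four' (f : ℂ → ℂ)
    (hf : DifferentiableOn ℂ f (ball (0 : ℂ) 1))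
    (p q : ℝ) (hp1 : 1 < p) (hp4 : p ≤ 4) (hq : q = p / (p - 1)) (ε : ℝ) (hε : 0 < ε) :
    ∀ z ∈ ball (0 : ℂ) 1,
      (deriv (deriv fun x : ℝ => (ε + (f (z + x)).re ^ 2) ^ (p / 2) + (ε + (f (z + x)).im ^ 2) ^ (p / 2)) 0
        + deriv (deriv fun y : ℝ => (ε + (f (z + y * Complex.I)).re ^ 2) ^ (p / 2) + (ε + (f (z + y * Complex.I)).im ^ 2) ^ (p / 2)) 0) ≥
        (p - 1) / p *
          (deriv (deriv fun x : ℝ => (q * ε + ((f (z + x)).re ^ 2 + (f (z + x)).im ^ 2)) ^ (p / 2)) 0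
           + deriv (deriv fun y : ℝ => (q * ε + ((f (z + y * Complex.I)).re ^ 2 + (f (z + y * Complex.I)).im ^ 2)) ^ (p / 2)) 0) := by
  intro z hz
  have hp0 : (0:ℝ) < p := by linarith
  have hpm : (0:ℝ) < p - 1 := by linarith
  have hq1 : 1 < q := by rw [hq, lt_div_iff₀ hpm]; linarith
  have hqε : 0 < q * ε := by positivity
  have hqp : (p - 1) * q = p := by rw [hq]; field_simp
  have hAn : AnalyticOnNhd ℂ f (ball 0 1) := hf.analyticOnNhd isOpen_ball
  have hfz : DifferentiableAt ℂ f z := (hAn z hz).differentiableAt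
  have hf'z : DifferentiableAt ℂ (deriv f) z := (hAn.deriv z hz).differentiableAt
  have hev : ∀ c : ℂ, ∀ᶠ t : ℝ in nhds (0:ℝ), DifferentiableAt ℂ f (z + ↑t * c) := by
    intro c
    have hc : ContinuousAt (fun t : ℝ => z + (t:ℂ) * c) 0 := by fun_prop
    have hmem : ball (0:ℂ) 1 ∈ nhds (z + ((0:ℝ):ℂ) * c) := by
      simpa using isOpen_ball.mem_nhds hz
    filter_upwards [hc.eventually_mem hmem] with t ht using (hAn _ ht).differentiableAt
  have e1 := lapUV_eq (f := f) (z := z) (c := 1) (ε := ε) (p/2) (hev 1) hfz hf'z hε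
  have e2 := lapUV_eq (f := f) (z := z) (c := Complex.I) (ε := ε) (p/2) (hev Complex.I) hfz hf'z hε
  have e3 := lapF_eq (f := f) (z := z) (c := 1) (d := q * ε) (p/2) (hev 1) hfz hf'z hqε
  have e4 := lapF_eq (f := f) (z := z) (c := Complex.I) (d := q * ε) (p/2) (hev Complex.I) hfz hf'z hqε
  simp only [mul_one, one_mul] at e1 e3
  rw [e1, e2, e3, e4]
  simp only [Complex.mul_re, Complex.mul_im, Complex.I_re, Complex.I_im]
  set u := (f z).re with hu
  set v := (f z).im with hv
  set a := (deriv f z).re with ha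
  set b := (deriv f z).im with hb
  set e := (deriv (deriv f) z).re with he
  set g := (deriv (deriv f) z).im with hg
  have hArw : (ε + u ^ 2) ^ (p/2 - 1) = (ε + u ^ 2) ^ (p/2 - 2) * (ε + u ^ 2) := by
    rw [show p/2 - 1 = (p/2 - 2) + 1 by ring, Real.rpow_add_one (by positivity)]
  have hBrw : (ε + v ^ 2) ^ (p/2 - 1) = (ε + v ^ 2) ^ (p/2 - 2) * (ε + v ^ 2) := by
    rw [show p/2 - 1 = (p/2 - 2) + 1 by ring, Real.rpow_add_one (by positivity)]
  have hCrw : (q * ε + (u ^ 2 + v ^ 2)) ^ (p/2 - 1)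
      = (q * ε + (u ^ 2 + v ^ 2)) ^ (p/2 - 2) * (q * ε + (u ^ 2 + v ^ 2)) := by
    rw [show p/2 - 1 = (p/2 - 2) + 1 by ring, Real.rpow_add_one (by positivity)]
  rw [hArw, hBrw, hCrw]
  set A2 := (ε + u ^ 2) ^ (p/2 - 2) with hA2
  set B2 := (ε + v ^ 2) ^ (p/2 - 2) with hB2
  set C2 := (q * ε + (u ^ 2 + v ^ 2)) ^ (p/2 - 2) with hC2
  have hCA : C2 ≤ A2 :=
    Real.rpow_le_rpow_of_nonpos (by positivity) (by nlinarith) (by linarith)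
  have hCB : C2 ≤ B2 :=
    Real.rpow_le_rpow_of_nonpos (by positivity) (by nlinarith) (by linarith)
  have hkey : C2 * (2 * ε + (p - 1) * (u ^ 2 + v ^ 2))
      ≤ A2 * (ε + (p - 1) * u ^ 2) + B2 * (ε + (p - 1) * v ^ 2) := by
    have h1 := mul_le_mul_of_nonneg_right hCA (show (0:ℝ) ≤ ε + (p - 1) * u ^ 2 by positivity)
    have h2 := mul_le_mul_of_nonneg_right hCB (show (0:ℝ) ≤ ε + (p - 1) * v ^ 2 by positivity)
    nlinarith [h1, h2]
  have hkey2 : C2 * (2 * (q * ε) + p * (u ^ 2 + v ^ 2)) * (p - 1)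
      ≤ (A2 * (ε + (p - 1) * u ^ 2) + B2 * (ε + (p - 1) * v ^ 2)) * p := by
    have h3 := mul_le_mul_of_nonneg_left hkey (le_of_lt hp0)
    have h4 : C2 * (2 * (q * ε) + p * (u ^ 2 + v ^ 2)) * (p - 1)
        = p * (C2 * (2 * ε + (p - 1) * (u ^ 2 + v ^ 2))) := by
      linear_combination (2 * C2 * ε) * hqp
    rw [h4]
    linarith
  rw [ge_iff_le, div_mul_eq_mul_div, div_le_iff₀ hp0]
  have hfact := mul_le_mul_of_nonneg_left hkey2 (show (0:ℝ) ≤ p * (a ^ 2 + b ^ 2) by positivity)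
  linarith [hfact]

/-- For `f = u+iv` holomorphic on the unit disk, `1 < p ≤ 4`, `q = p/(p-1)`, `ε > 0`, with
`F_ε = (qε + |f|²)^{p/2}`, `U_ε = (ε + u²)^{p/2}`, `V_ε = (ε + v²)^{p/2}`:
`Δ(U_ε + V_ε) ≤ ((p-1)/p) Δ F_ε` (reversed) pointwise on the disk. -/
theorem laplacian_comparison_le_four (f : ℂ → ℂ)
    (hf : DifferentiableOn ℂ f (ball (0 : ℂ) 1))
    (p q : ℝ) (hp1 : 1 < p) (hp4 : p ≤ 4) (hq : q = p / (p - 1)) (ε : ℝ) (hε : 0 < ε) :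
    ∀ z ∈ ball (0 : ℂ) 1,
      planarLaplacian (fun w => (ε + (f w).re ^ 2) ^ (p / 2) + (ε + (f w).im ^ 2) ^ (p / 2)) z ≥
        (p - 1) / p *
          planarLaplacian (fun w => (q * ε + ‖f w‖ ^ 2) ^ (p / 2)) z := by
  intro z hz
  have habs : (fun w => (q * ε + ‖f w‖ ^ 2) ^ (p / 2)) =
      (fun w => (q * ε + ((f w).re ^ 2 + (f w).im ^ 2)) ^ (p / 2)) := by
    funext w; congr 1; rw [Complex.sq_norm, Complex.normSq_apply]; ring
  rw [habs]
  simp only [planarLaplacian]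
  exact laplacian_comparison_le_four' f hf p q hp1 hp4 hq ε hε z hz
end

section
/- For all real $r > 0$, $t > 0$, $\epsilon > 0$, $p \geq 4$, and all $s \in \mathbb{R}$ with $s$ a multiple of $\pi/4$ at which the relevant expression is stationary, the function $Q(s) = \frac{(\epsilon + r^2\cos^2 s)^{p/2-2}(\epsilon + (p-1)r^2\cos^2 s) + (\epsilon + r^2\sin^2 s)^{p/2-2}(\epsilon + (p-1)r^2\sin^2 s)}{(2\epsilon + (p-1)r^2)\left(\frac{\epsilon p}{p-1} + r^2\right)^{p/2-2}}$ satisfies $Q(\pi/4) = 2^{2-p/2}\left(\frac{p-1+pt}{(p-1)(1+2t)}\right)^{2-p/2} \leq 1$ where $\epsilon = tr^2$, and $Q(\pi/4) \geq 1$ when $1 < p \leq 4$. -/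
open Real

/-- The ratio `Q(s) = Δ(U_ε+V_ε) / ((p-1)/p · Δ F_ε)` at a point where `f = r e^{is}`,
with `ε = t r²`, evaluated at the stationary point `s = π/4`: it equals
`2^{2-p/2} ((p-1+pt)/((p-1)(1+2t)))^{2-p/2}`, which is `≤ 1` for `p ≥ 4` and `≥ 1` for
`1 < p ≤ 4`. -/
theorem Q_at_pi_div_four (r t p : ℝ) (hr : 0 < r) (ht : 0 < t) (hp : 1 < p)
    (ε : ℝ) (hε : ε = t * r ^ 2)
    (Q : ℝ → ℝ)
    (hQ : ∀ s : ℝ, Q s =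
      ((ε + r ^ 2 * cos s ^ 2) ^ (p / 2 - 2) * (ε + (p - 1) * r ^ 2 * cos s ^ 2) +
        (ε + r ^ 2 * sin s ^ 2) ^ (p / 2 - 2) * (ε + (p - 1) * r ^ 2 * sin s ^ 2)) /
      ((2 * ε + (p - 1) * r ^ 2) * (ε * p / (p - 1) + r ^ 2) ^ (p / 2 - 2))) :
    Q (π / 4) =
      (2 : ℝ) ^ (2 - p / 2) * ((p - 1 + p * t) / ((p - 1) * (1 + 2 * t))) ^ (2 - p / 2) ∧
    (4 ≤ p → Q (π / 4) ≤ 1) ∧ (p ≤ 4 → 1 ≤ Q (π / 4)) := by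
  have hp1 : (0 : ℝ) < p - 1 := by linarith
  have hr2 : (0 : ℝ) < r ^ 2 := by positivity
  have hc : cos (π / 4) ^ 2 = 1 / 2 := by
    rw [cos_pi_div_four, div_pow, sq_sqrt (by norm_num : (0:ℝ) ≤ 2)]; norm_num
  have hs : sin (π / 4) ^ 2 = 1 / 2 := by
    rw [sin_pi_div_four, div_pow, sq_sqrt (by norm_num : (0:ℝ) ≤ 2)]; norm_num
  set a : ℝ := r ^ 2 * (1 + 2 * t) / 2 with ha
  set b : ℝ := r ^ 2 * (t * p + p - 1) / (p - 1) with hb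
  have ha0 : 0 < a := by positivity
  have hb0 : 0 < b := by
    have : 0 < t * p + p - 1 := by nlinarith
    positivity
  have h1 : ε + r ^ 2 * cos (π / 4) ^ 2 = a := by rw [hc, hε, ha]; ring
  have h2 : ε + r ^ 2 * sin (π / 4) ^ 2 = a := by rw [hs, hε, ha]; ring
  have h3 : ε * p / (p - 1) + r ^ 2 = b := by
    rw [hε, hb]; field_simp; ring
  have hd0 : (0 : ℝ) < 2 * ε + (p - 1) * r ^ 2 := by rw [hε]; nlinarith
  have hQval : Q (π / 4) = (b / a) ^ (2 - p / 2) := by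
    rw [hQ, h1, h2, h3, hc, hs]
    have hnum : a ^ (p / 2 - 2) * (ε + (p - 1) * r ^ 2 * (1 / 2)) +
        a ^ (p / 2 - 2) * (ε + (p - 1) * r ^ 2 * (1 / 2)) =
        a ^ (p / 2 - 2) * (2 * ε + (p - 1) * r ^ 2) := by ring
    rw [hnum, mul_comm (2 * ε + (p - 1) * r ^ 2) (b ^ (p / 2 - 2)),
      mul_div_mul_right _ _ (ne_of_gt hd0),
      ← Real.div_rpow ha0.le hb0.le,
      show a / b = (b / a)⁻¹ by rw [inv_div],
      Real.inv_rpow (by positivity), ← Real.rpow_neg (by positivity)]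
    congr 1
    ring
  have hBval : b / a = 2 * ((p - 1 + p * t) / ((p - 1) * (1 + 2 * t))) := by
    rw [ha, hb]
    field_simp
    ring
  have hB1 : 1 ≤ b / a := by
    rw [hBval, ← mul_div_assoc, le_div_iff₀ (by positivity)]
    nlinarith
  have hmain : Q (π / 4) =
      (2 : ℝ) ^ (2 - p / 2) * ((p - 1 + p * t) / ((p - 1) * (1 + 2 * t))) ^ (2 - p / 2) := by
    rw [hQval, hBval, Real.mul_rpow (by norm_num) (by positivity)]
  refine ⟨hmain, ?_, ?_⟩
  · intro h4
    rw [hQval]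
    exact Real.rpow_le_one_of_one_le_of_nonpos hB1 (by linarith)
  · intro h4
    rw [hQval]
    exact Real.one_le_rpow hB1 (by linarith)
end

section
/- For $p \geq 4$ and all real $t > 0$, the inequality $\frac{t^{p/2-1}}{p-1+2t} + \frac{(1+t)^{p/2-2}(p-1+t)}{p-1+2t} \leq \left(1 + t + \frac{t}{p-1}\right)^{p/2-2}$ holds. -/
/-- For `p ≥ 4` and `t > 0`:
`t^{p/2-1}/(p-1+2t) + (1+t)^{p/2-2}(p-1+t)/(p-1+2t) ≤ (1 + t + t/(p-1))^{p/2-2}`. -/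
theorem elementary_ineq_p_ge_four (p t : ℝ) (hp : 4 ≤ p) (ht : 0 < t) :
    t ^ (p / 2 - 1) / (p - 1 + 2 * t) +
      (1 + t) ^ (p / 2 - 2) * (p - 1 + t) / (p - 1 + 2 * t) ≤
    (1 + t + t / (p - 1)) ^ (p / 2 - 2) := by
  have hp1 : (0:ℝ) < p - 1 := by linarith
  have hq : (0:ℝ) ≤ p / 2 - 2 := by linarith
  have hd : (0:ℝ) < p - 1 + 2 * t := by linarith
  have htp : 0 ≤ t / (p - 1) := by positivity
  have hx : 0 < 1 + t + t / (p - 1) := by linarith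
  have h1 : t ^ (p / 2 - 1) = t ^ (p / 2 - 2) * t := by
    rw [← Real.rpow_add_one ht.ne']; ring_nf
  have hb1 : t ^ (p / 2 - 2) ≤ (1 + t + t / (p - 1)) ^ (p / 2 - 2) :=
    Real.rpow_le_rpow ht.le (by linarith) hq
  have hb2 : (1 + t) ^ (p / 2 - 2) ≤ (1 + t + t / (p - 1)) ^ (p / 2 - 2) :=
    Real.rpow_le_rpow (by linarith) (by linarith) hq
  rw [h1, ← add_div, div_le_iff₀ hd]
  nlinarith [mul_le_mul_of_nonneg_right hb1 ht.le,
    mul_le_mul_of_nonneg_right hb2 (by linarith : (0:ℝ) ≤ p - 1 + t)]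
end

section
/- For $2 \leq p \leq 4$ and all real $t > 0$, the inequality $\frac{t^{p/2-1}}{p-1+2t} + \frac{(1+t)^{p/2-2}(p-1+t)}{p-1+2t} \geq \left(\frac{p-1+pt}{p-1}\right)^{p/2-2}$ holds. -/
open Real Set

lemma convexOn_rpow_nonpos {α : ℝ} (hα : α ≤ 0) :
    ConvexOn ℝ (Ioi (0:ℝ)) fun x : ℝ => x ^ α := by
  have hderiv : ∀ x ∈ Ioi (0:ℝ), deriv (fun x : ℝ => x ^ α) x = α * x ^ (α - 1) :=
    fun x hx => (Real.hasDerivAt_rpow_const (Or.inl (ne_of_gt hx))).deriv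
  have hint : interior (Ioi (0:ℝ)) = Ioi 0 := interior_Ioi
  refine convexOn_of_deriv2_nonneg (convex_Ioi 0) ?_ ?_ ?_ ?_
  · exact fun x hx =>
      ((Real.hasDerivAt_rpow_const (Or.inl (ne_of_gt hx))).continuousAt).continuousWithinAt
  · rw [hint]
    exact fun x hx => ((Real.hasDerivAt_rpow_const (Or.inl (ne_of_gt hx))).differentiableAt).differentiableWithinAt
  · rw [hint]
    intro x hx
    have hev : deriv (fun x : ℝ => x ^ α) =ᶠ[nhds x] fun x => α * x ^ (α - 1) :=
      Filter.eventuallyEq_of_mem (Ioi_mem_nhds hx) hderiv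
    have : DifferentiableAt ℝ (fun x : ℝ => α * x ^ (α - 1)) x :=
      ((Real.hasDerivAt_rpow_const (Or.inl (ne_of_gt hx))).differentiableAt).const_mul α
    exact (this.congr_of_eventuallyEq hev).differentiableWithinAt
  · rw [hint]
    intro x hx
    have hev : deriv (fun x : ℝ => x ^ α) =ᶠ[nhds x] fun x => α * x ^ (α - 1) :=
      Filter.eventuallyEq_of_mem (Ioi_mem_nhds hx) hderiv
    have h2 : deriv^[2] (fun x : ℝ => x ^ α) x
        = α * ((α - 1) * x ^ (α - 1 - 1)) := by
      have : deriv (deriv (fun x : ℝ => x ^ α)) x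
          = deriv (fun x => α * x ^ (α - 1)) x := hev.deriv_eq
      rw [Function.iterate_succ, Function.iterate_one, Function.comp_apply, this,
        deriv_const_mul _ ((Real.hasDerivAt_rpow_const
          (p := α - 1) (Or.inl (ne_of_gt hx))).differentiableAt),
        (Real.hasDerivAt_rpow_const (p := α - 1) (Or.inl (ne_of_gt hx))).deriv]
    rw [h2]
    have hxpos : (0:ℝ) < x ^ (α - 1 - 1) := Real.rpow_pos_of_pos hx _
    nlinarith [mul_nonneg (mul_nonneg (neg_nonneg.2 hα)
      (by linarith : (0:ℝ) ≤ 1 - α)) hxpos.le]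

/-- For `2 ≤ p ≤ 4` and `t > 0`:
`t^{p/2-1}/(p-1+2t) + (1+t)^{p/2-2}(p-1+t)/(p-1+2t) ≥ ((p-1+pt)/(p-1))^{p/2-2}`. -/
theorem elementary_ineq_p_le_four (p t : ℝ) (hp2 : 2 ≤ p) (hp4 : p ≤ 4) (ht : 0 < t) :
    ((p - 1 + p * t) / (p - 1)) ^ (p / 2 - 2) ≤
      t ^ (p / 2 - 1) / (p - 1 + 2 * t) +
        (1 + t) ^ (p / 2 - 2) * (p - 1 + t) / (p - 1 + 2 * t) := by
  set α := p / 2 - 2 with hαdef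
  have hα : α ≤ 0 := by simp [hαdef]; linarith
  have hp1 : (0:ℝ) < p - 1 := by linarith
  have hd : (0:ℝ) < p - 1 + 2 * t := by linarith
  set a := t / (p - 1 + 2 * t) with ha
  set b := (p - 1 + t) / (p - 1 + 2 * t) with hb
  have ha0 : 0 ≤ a := by positivity
  have hb0 : 0 ≤ b := by positivity
  have hab : a + b = 1 := by rw [ha, hb, ← add_div, div_eq_one_iff_eq hd.ne']; ring
  have hconv := (convexOn_rpow_nonpos hα).2 (mem_Ioi.mpr ht)
    (mem_Ioi.mpr (by linarith : (0:ℝ) < 1 + t)) ha0 hb0 hab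
  simp only [smul_eq_mul] at hconv
  -- the combination point
  have hx0 : a * t + b * (1 + t) = (2 * t ^ 2 + p * t + (p - 1)) / (p - 1 + 2 * t) := by
    rw [ha, hb, div_mul_eq_mul_div, div_mul_eq_mul_div, ← add_div]; ring
  have hx0pos : (0:ℝ) < a * t + b * (1 + t) := by
    rw [hx0]; positivity
  have hle : a * t + b * (1 + t) ≤ (p - 1 + p * t) / (p - 1) := by
    rw [hx0, div_le_div_iff₀ hd hp1]
    nlinarith
  have hmono : ((p - 1 + p * t) / (p - 1)) ^ α ≤ (a * t + b * (1 + t)) ^ α :=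
    Real.rpow_le_rpow_of_nonpos hx0pos hle hα
  have h1 : t ^ (p / 2 - 1) = t * t ^ α := by
    rw [show p / 2 - 1 = 1 + (p / 2 - 2) by ring, Real.rpow_add ht, Real.rpow_one]
  calc ((p - 1 + p * t) / (p - 1)) ^ α ≤ (a * t + b * (1 + t)) ^ α := hmono
    _ ≤ a * t ^ α + b * (1 + t) ^ α := hconv
    _ = t ^ (p / 2 - 1) / (p - 1 + 2 * t) + (1 + t) ^ α * (p - 1 + t) / (p - 1 + 2 * t) := by
        rw [h1, ha, hb]; ring
end

section
/- The equation $\left(\frac{p}{p-1}\right)^{1/p} = 2^{-1/p}\frac{1}{\sin(\pi/(2p))}$ has a unique solution $p_1$ in $[2, \infty)$, and moreover $2^{-1/p}\frac{1}{\cos(\pi/(2p))} \leq \left(\frac{p}{p-1}\right)^{1/p}$ for all $p \geq 4$. -/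
open Real Set

private lemma base_gt_one {p : ℝ} (hp : 2 ≤ p) : 1 < p / (p - 1) := by
  rw [lt_div_iff₀ (by linarith)]; linarith

private lemma f_exp {p : ℝ} (hp : 2 ≤ p) :
    (p / (p - 1)) ^ (1 / p) = Real.exp (1 / p * Real.log (p / (p - 1))) := by
  rw [Real.rpow_def_of_pos (by linarith [base_gt_one hp]), mul_comm]

private lemma f_anti : StrictAntiOn (fun p : ℝ => (p / (p - 1)) ^ (1 / p)) (Ici 2) := by
  intro a ha b hb hab
  simp only [mem_Ici] at ha hb
  have hA : 1 < a / (a - 1) := base_gt_one ha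
  have hB : 1 < b / (b - 1) := base_gt_one hb
  have hBA : b / (b - 1) < a / (a - 1) := by
    rw [div_lt_div_iff₀ (by linarith) (by linarith)]; nlinarith
  simp only [f_exp ha, f_exp hb, Real.exp_lt_exp]
  have hLb : 0 < Real.log (b / (b - 1)) := Real.log_pos hB
  have hLab : Real.log (b / (b - 1)) < Real.log (a / (a - 1)) :=
    Real.log_lt_log (by linarith) hBA
  have h1 : (1 : ℝ) / b < 1 / a := by
    apply one_div_lt_one_div_of_lt <;> linarith
  have s1 : 1 / b * Real.log (b / (b - 1)) < 1 / a * Real.log (b / (b - 1)) :=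
    mul_lt_mul_of_pos_right h1 hLb
  have s2 : 1 / a * Real.log (b / (b - 1)) < 1 / a * Real.log (a / (a - 1)) :=
    mul_lt_mul_of_pos_left hLab (by positivity)
  linarith

private lemma sin_arg_pos {p : ℝ} (hp : 2 ≤ p) : 0 < Real.sin (π / (2 * p)) := by
  apply Real.sin_pos_of_pos_of_lt_pi
  · positivity
  · rw [div_lt_iff₀ (by linarith)]
    nlinarith [Real.pi_pos]

private lemma g_mono : StrictMonoOn
    (fun p : ℝ => (2 : ℝ) ^ (-(1 / p)) * (1 / Real.sin (π / (2 * p)))) (Ici 2) := by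
  intro a ha b hb hab
  simp only [mem_Ici] at ha hb
  have hsa : 0 < Real.sin (π / (2 * a)) := sin_arg_pos ha
  have hsb : 0 < Real.sin (π / (2 * b)) := sin_arg_pos hb
  have harg : π / (2 * b) < π / (2 * a) := by
    apply div_lt_div_of_pos_left Real.pi_pos (by linarith) (by linarith)
  have hle : π / (2 * a) ≤ π / 2 := by
    rw [div_le_div_iff₀ (by linarith) (by norm_num)]
    nlinarith [Real.pi_pos]
  have hsin : Real.sin (π / (2 * b)) < Real.sin (π / (2 * a)) :=
    Real.sin_lt_sin_of_lt_of_le_pi_div_two ((by positivity : (0:ℝ) ≤ π / (2*b)).trans' (by nlinarith [Real.pi_pos])) hle harg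
  have h1 : (2 : ℝ) ^ (-(1 / a)) < 2 ^ (-(1 / b)) := by
    apply (Real.rpow_lt_rpow_left_iff (by norm_num)).2
    have : 1 / b < 1 / a := by apply one_div_lt_one_div_of_lt <;> linarith
    linarith
  have h2 : 1 / Real.sin (π / (2 * a)) < 1 / Real.sin (π / (2 * b)) :=
    one_div_lt_one_div_of_lt hsb hsin
  exact mul_lt_mul'' h1 h2 (Real.rpow_pos_of_pos (by norm_num) _).le (by positivity)

private lemma f_two : ((2:ℝ) / (2 - 1)) ^ ((1:ℝ) / 2) = Real.sqrt 2 := by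
  rw [Real.sqrt_eq_rpow]; norm_num

private lemma g_two : (2 : ℝ) ^ (-(1 / (2:ℝ))) * (1 / Real.sin (π / (2 * 2))) = 1 := by
  have h4 : π / (2 * 2) = π / 4 := by ring
  rw [h4, Real.sin_pi_div_four, Real.rpow_neg (by norm_num), ← Real.sqrt_eq_rpow]
  have h : Real.sqrt 2 * Real.sqrt 2 = 2 := Real.mul_self_sqrt (by norm_num)
  have h0 : (0:ℝ) < Real.sqrt 2 := by positivity
  field_simp
  nlinarith [h]

private lemma f_four_le : ((4:ℝ) / (4 - 1)) ^ ((1:ℝ) / 4) ≤ Real.sqrt 2 := by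
  have h1 : ((4:ℝ) / (4 - 1)) ^ ((1:ℝ) / 4) ≤ (2:ℝ) ^ ((1:ℝ) / 4) :=
    Real.rpow_le_rpow (by norm_num) (by norm_num) (by norm_num)
  have h2 : (2:ℝ) ^ ((1:ℝ) / 4) ≤ (2:ℝ) ^ ((1:ℝ) / 2) :=
    (Real.rpow_le_rpow_left_iff (by norm_num)).2 (by norm_num)
  rw [Real.sqrt_eq_rpow]
  linarith

private lemma g_four_gt : Real.sqrt 2 < (2 : ℝ) ^ (-(1 / (4:ℝ))) * (1 / Real.sin (π / (2 * 4))) := by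
  have hpi := Real.pi_pos
  have hs : 0 < Real.sin (π / (2 * 4)) := sin_arg_pos (by norm_num)
  have hlt : Real.sin (π / (2 * 4)) < π / 8 := by
    have := Real.sin_lt (x := π / (2 * 4)) (by positivity)
    linarith [this]
  have h2 : 8 / π < 1 / Real.sin (π / (2 * 4)) := by
    have := one_div_lt_one_div_of_lt hs hlt
    rw [one_div_div] at this
    linarith
  have hA : ((Real.sqrt 2)⁻¹ : ℝ) ≤ (2:ℝ) ^ (-(1 / (4:ℝ))) := by
    have : (2:ℝ) ^ (-(1 / (2:ℝ))) ≤ (2:ℝ) ^ (-(1 / (4:ℝ))) :=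
      (Real.rpow_le_rpow_left_iff (by norm_num)).2 (by norm_num)
    rwa [Real.rpow_neg (by norm_num), ← Real.sqrt_eq_rpow] at this
  have h0 : (0:ℝ) < Real.sqrt 2 := by positivity
  have hm : Real.sqrt 2 * Real.sqrt 2 = 2 := Real.mul_self_sqrt (by norm_num)
  have hkey : Real.sqrt 2 < (Real.sqrt 2)⁻¹ * (8 / π) := by
    rw [lt_inv_mul_iff₀ h0]
    rw [lt_div_iff₀ hpi]
    nlinarith [Real.pi_lt_d2]
  calc Real.sqrt 2 < (Real.sqrt 2)⁻¹ * (8 / π) := hkey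
    _ ≤ (2:ℝ) ^ (-(1 / (4:ℝ))) * (1 / Real.sin (π / (2 * 4))) :=
      mul_le_mul hA h2.le (by positivity) (by positivity)

private lemma cont_D : ContinuousOn (fun p : ℝ =>
    (2 : ℝ) ^ (-(1 / p)) * (1 / Real.sin (π / (2 * p))) - (p / (p - 1)) ^ (1 / p))
    (Icc 2 4) := by
  have hne : ∀ x ∈ Icc (2:ℝ) 4, x - 1 ≠ 0 := fun x hx => by
    have := hx.1; intro h; linarith
  have hxne : ∀ x ∈ Icc (2:ℝ) 4, x ≠ 0 := fun x hx => by
    have := hx.1; intro h; linarith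
  have hc1 : ContinuousOn (fun p : ℝ => p / (p - 1)) (Icc 2 4) :=
    ContinuousOn.div continuousOn_id (by fun_prop) hne
  have hc2 : ContinuousOn (fun p : ℝ => 1 / p) (Icc 2 4) :=
    ContinuousOn.div continuousOn_const continuousOn_id hxne
  have hf : ContinuousOn (fun p : ℝ => (p / (p - 1)) ^ (1 / p)) (Icc 2 4) :=
    hc1.rpow hc2 (fun x hx => Or.inl (by
      have := base_gt_one hx.1; positivity))
  have hg1 : ContinuousOn (fun p : ℝ => (2:ℝ) ^ (-(1 / p))) (Icc 2 4) :=
    ContinuousOn.rpow continuousOn_const hc2.neg (fun x hx => Or.inl (by norm_num))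
  have hg2 : ContinuousOn (fun p : ℝ => 1 / Real.sin (π / (2 * p))) (Icc 2 4) := by
    apply ContinuousOn.div continuousOn_const
    · exact Real.continuous_sin.comp_continuousOn
        (ContinuousOn.div continuousOn_const (by fun_prop)
          (fun x hx => by have := hx.1; intro h; linarith))
    · exact fun x hx => (sin_arg_pos hx.1).ne'
  exact (hg1.mul hg2).sub hf

private lemma key_cos {p : ℝ} (hp : 4 ≤ p) :
    p * (-Real.log (Real.cos (π / (2 * p)))) ≤ Real.log 2 := by
  have hpi := Real.pi_pos
  have hp0 : (0:ℝ) < p := by linarith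
  set x := π / (2 * p) with hx
  have hx0 : 0 < x := by positivity
  have hx2 : x ^ 2 = π ^ 2 / (4 * p ^ 2) := by rw [hx]; field_simp; ring
  have hπsq : π ^ 2 < 10 := by nlinarith [Real.pi_lt_d2]
  have ht : x ^ 2 / 2 ≤ π ^ 2 / 128 := by
    have h64 : x ^ 2 ≤ π ^ 2 / 64 := by
      rw [hx2, div_le_div_iff₀ (by positivity) (by norm_num)]
      nlinarith [mul_nonneg (sq_nonneg π) (show (0:ℝ) ≤ 4 * p ^ 2 - 64 by nlinarith)]
    linarith
  have htlt : x ^ 2 / 2 < 1 / 10 := by nlinarith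
  have hpos : 0 < 1 - x ^ 2 / 2 := by linarith
  have hcos_lb : 1 - x ^ 2 / 2 ≤ Real.cos x := Real.one_sub_sq_div_two_le_cos
  have hcpos : 0 < Real.cos x := lt_of_lt_of_le hpos hcos_lb
  have hlog : Real.log (1 - x ^ 2 / 2) ≤ Real.log (Real.cos x) :=
    Real.log_le_log hpos hcos_lb
  have hinv := Real.log_le_sub_one_of_pos (show (0:ℝ) < (1 - x ^ 2 / 2)⁻¹ by positivity)
  rw [Real.log_inv] at hinv
  have hneg : -Real.log (Real.cos x) ≤ (1 - x ^ 2 / 2)⁻¹ - 1 := by linarith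
  have hid : (1 - x ^ 2 / 2)⁻¹ - 1 = (x ^ 2 / 2) / (1 - x ^ 2 / 2) := by
    have hne : (2:ℝ) - x ^ 2 ≠ 0 := by nlinarith
    field_simp
    ring
  have hpt : p * (x ^ 2 / 2) ≤ π ^ 2 / 32 := by
    have he : p * (x ^ 2 / 2) = π ^ 2 / (8 * p) := by rw [hx2]; field_simp; ring
    rw [he, div_le_div_iff₀ (by positivity) (by norm_num)]
    nlinarith [sq_nonneg π]
  have h1 : p * (-Real.log (Real.cos x)) ≤ p * ((x ^ 2 / 2) / (1 - x ^ 2 / 2)) := by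
    apply mul_le_mul_of_nonneg_left _ hp0.le
    rw [← hid]; exact hneg
  have h3 : p * ((x ^ 2 / 2) / (1 - x ^ 2 / 2)) ≤ 0.35 := by
    rw [show p * ((x ^ 2 / 2) / (1 - x ^ 2 / 2)) = p * (x ^ 2 / 2) / (1 - x ^ 2 / 2) by ring,
      div_le_iff₀ hpos]
    nlinarith
  have hl2 := Real.log_two_gt_d9
  linarith

private lemma sqrt_two_gt_one : (1:ℝ) < Real.sqrt 2 := by
  have h : Real.sqrt 1 < Real.sqrt 2 := Real.sqrt_lt_sqrt (by norm_num) (by norm_num)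
  simpa using h

/-- The equation `(p/(p-1))^{1/p} = 2^{-1/p}/sin(π/(2p))` has a unique solution on `[2, ∞)`,
and `2^{-1/p}/cos(π/(2p)) ≤ (p/(p-1))^{1/p}` for all `p ≥ 4`. -/
theorem constants_comparison :
    (∃! p : ℝ, p ∈ Set.Ici (2 : ℝ) ∧
      (p / (p - 1)) ^ (1 / p) = (2 : ℝ) ^ (-(1 / p)) * (1 / Real.sin (π / (2 * p)))) ∧
    ∀ p : ℝ, 4 ≤ p →
      (2 : ℝ) ^ (-(1 / p)) * (1 / Real.cos (π / (2 * p))) ≤ (p / (p - 1)) ^ (1 / p) := by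
  constructor
  · -- existence via IVT
    have hD2 : (2:ℝ) ^ (-(1/(2:ℝ))) * (1 / Real.sin (π/(2*2))) - ((2:ℝ)/(2-1)) ^ ((1:ℝ)/2) ≤ 0 := by
      rw [g_two, f_two]; linarith [sqrt_two_gt_one]
    have hD4 : 0 ≤ (2:ℝ) ^ (-(1/(4:ℝ))) * (1 / Real.sin (π/(2*4))) - ((4:ℝ)/(4-1)) ^ ((1:ℝ)/4) := by
      linarith [g_four_gt, f_four_le]
    obtain ⟨c, hc, hDc⟩ := intermediate_value_Icc (by norm_num : (2:ℝ) ≤ 4) cont_D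
      (Set.mem_Icc.2 ⟨hD2, hD4⟩)
    simp only at hDc
    have hceq : (c / (c - 1)) ^ (1 / c) = (2:ℝ) ^ (-(1/c)) * (1 / Real.sin (π/(2*c))) := by
      exact (sub_eq_zero.1 hDc).symm
    refine ⟨c, ⟨Set.mem_Ici.2 hc.1, hceq⟩, ?_⟩
    rintro q ⟨hq, heq⟩
    by_contra hne
    have hcI : c ∈ Set.Ici (2:ℝ) := Set.mem_Ici.2 hc.1
    rcases lt_or_gt_of_ne hne with h | h
    · have h1 := f_anti hq hcI h
      have h2 := g_mono hq hcI h
      simp only at h1 h2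
      rw [heq] at h1
      rw [hceq] at h1
      linarith
    · have h1 := f_anti hcI hq h
      have h2 := g_mono hcI hq h
      simp only at h1 h2
      rw [heq] at h1
      rw [hceq] at h1
      linarith
  · intro p hp
    have hp0 : (0:ℝ) < p := by linarith
    have hp2 : (2:ℝ) ≤ p := by linarith
    have hpi := Real.pi_pos
    have hcpos : 0 < Real.cos (π / (2 * p)) := by
      apply Real.cos_pos_of_mem_Ioo
      constructor
      · have : (0:ℝ) < π / (2 * p) := by positivity
        linarith
      · rw [div_lt_div_iff₀ (by linarith) (by norm_num)]
        nlinarith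
    have lhs_eq : (2:ℝ) ^ (-(1/p)) * (1 / Real.cos (π/(2*p))) =
        Real.exp (Real.log 2 * (-(1/p)) + (-(Real.log (Real.cos (π/(2*p)))))) := by
      rw [Real.exp_add, Real.rpow_def_of_pos (by norm_num : (0:ℝ) < 2)]
      congr 1
      rw [Real.exp_neg, Real.exp_log hcpos, one_div]
    rw [lhs_eq, f_exp hp2, Real.exp_le_exp]
    have hk := key_cos hp
    have hA : -Real.log (Real.cos (π/(2*p))) ≤ Real.log 2 / p := by
      rw [le_div_iff₀ hp0]
      linarith [mul_comm p (-Real.log (Real.cos (π/(2*p))))]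
    have hlognn : 0 ≤ Real.log (p / (p - 1)) := Real.log_nonneg (base_gt_one hp2).le
    have e1 : Real.log 2 * (-(1/p)) = -(Real.log 2 / p) := by ring
    have e2 : 1 / p * Real.log (p / (p - 1)) = Real.log (p / (p - 1)) / p := by ring
    rw [e1, e2]
    have : 0 ≤ Real.log (p / (p - 1)) / p := by positivity
    linarith
end
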